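/- arXiv:1303.0400 — 5 statements merged into one kernel-verified Lean document; each statement's English description precedes it below -/
import Mathlib

section
/- If Y is a uniformly random permutation of the multiset with d copies of each element of [n], then for any two fixed distinct edge positions, the probability that the two corresponding edges of Y are identical as multisets is at most (k!)^2 * n^k * d^{2k} / (nd)_{2k}, where (x)_a denotes the falling factorial. -/
/-- The set of permutations of the multiset consisting of `d` copies of each element of
`Fin n`, encoded as sequences of length `n*d` (functions `Fin (n*d) → Fin n`) in which
every symbol occurs exactly `d` times. -/
def permSet (n d : ℕ) : Finset (Fin (n * d) → Fin n) :=
  Finset.univ.filter (fun y => ∀ v, (Finset.univ.filter (fun i => y i = v)).card = d)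

/-- The `i`-th edge of the sequence `y`: the multiset of its entries in positions
`k*i+1, …, k*i+k` (0-indexed: `k*i, …, k*i+k-1`); positions out of range contribute
nothing (which never happens for `i < m` when `n*d = k*m`). -/
def edgeOf {n d : ℕ} (k : ℕ) (y : Fin (n * d) → Fin n) (i : ℕ) : Multiset (Fin n) :=
  (Finset.range k).val.filterMap
    (fun j => if h : k * i + j < n * d then some (y ⟨k * i + j, h⟩) else none)

/-- A multiset (edge) is a *simple loop* if exactly one vertex has multiplicity 2 and
no vertex has multiplicity greater than 2 (so all other vertices are distinct, of
multiplicity 1). -/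
def isSimpleLoop {n : ℕ} (e : Multiset (Fin n)) : Prop :=
  (Finset.univ.filter (fun v => e.count v = 2)).card = 1 ∧ ∀ v, e.count v ≤ 2

instance {n : ℕ} : DecidablePred (isSimpleLoop (n := n)) := fun _ => by
  unfold isSimpleLoop; infer_instance

/-- The number of edges of `y` (among its `n*d/k` consecutive `k`-blocks) that are
simple loops. -/
def numSimpleLoops {n d : ℕ} (k : ℕ) (y : Fin (n * d) → Fin n) : ℕ :=
  ((Finset.range (n * d / k)).filter (fun i => isSimpleLoop (edgeOf k y i))).card

namespace Stmt2Aux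

variable {n k d : ℕ}

/-- The multiset of values of a tuple. -/
def tmul {k n : ℕ} (u : Fin k → Fin n) : Multiset (Fin n) := Multiset.map u Finset.univ.val

/-- The "two equal edges" condition on a word indexed by `Fin k ⊕ Fin k`. -/
def cond {k n : ℕ} (w : Fin k ⊕ Fin k → Fin n) : Prop :=
  tmul (w ∘ Sum.inl) = tmul (w ∘ Sum.inr)

instance {k n : ℕ} : DecidablePred (cond (k := k) (n := n)) := fun _ => by
  unfold cond; infer_instance

lemma tmul_comp_perm (u : Fin k → Fin n) (σ : Equiv.Perm (Fin k)) :
    tmul (u ∘ σ) = tmul u := by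
  unfold tmul
  rw [← Multiset.map_map]
  congr 1
  calc Multiset.map (⇑σ) Finset.univ.val = (Finset.univ.map σ.toEmbedding).val := rfl
    _ = Finset.univ.val := by rw [Finset.map_univ_equiv]

lemma ofFn_tmul (u : Fin k → Fin n) : (List.ofFn u : Multiset (Fin n)) = tmul u := by
  simp [tmul, Multiset.map, List.ofFn_eq_map]
  rfl

lemma exists_comp_perm {u v : Fin k → Fin n} (h : tmul u = tmul v) :
    ∃ σ : Equiv.Perm (Fin k), v = u ∘ σ := by
  have h1 : u ∘ Tuple.sort u = v ∘ Tuple.sort v := by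
    have hp : (List.ofFn (u ∘ Tuple.sort u)).Perm (List.ofFn (v ∘ Tuple.sort v)) := by
      have hmm : (List.ofFn (u ∘ Tuple.sort u) : Multiset (Fin n))
          = (List.ofFn (v ∘ Tuple.sort v) : Multiset (Fin n)) := by
        rw [ofFn_tmul, ofFn_tmul, tmul_comp_perm, tmul_comp_perm, h]
      exact Multiset.coe_eq_coe.mp hmm
    exact List.ofFn_injective (List.Perm.eq_of_sortedLE
      ((Tuple.monotone_sort u).sortedLE_ofFn) ((Tuple.monotone_sort v).sortedLE_ofFn) hp)
  refine ⟨Equiv.trans (Tuple.sort v).symm (Tuple.sort u), funext fun x => ?_⟩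
  have := congrFun h1 ((Tuple.sort v).symm x)
  simpa using this.symm

lemma card_rearr (u : Fin k → Fin n) :
    (Finset.univ.filter (fun v : Fin k → Fin n => tmul v = tmul u)).card ≤ k.factorial := by
  have : (Finset.univ.filter (fun v : Fin k → Fin n => tmul v = tmul u)).card
      ≤ (Finset.univ : Finset (Equiv.Perm (Fin k))).card := by
    apply Finset.card_le_card_of_surjOn (fun σ : Equiv.Perm (Fin k) => u ∘ ⇑σ)
    intro v hv
    simp only [Finset.coe_filter, Set.mem_setOf_eq, Finset.mem_univ, true_and] at hv
    obtain ⟨σ, hσ⟩ := exists_comp_perm hv.symm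
    exact ⟨σ, by simp, hσ.symm⟩
  simpa [Fintype.card_perm] using this

lemma card_cond_words :
    (Finset.univ.filter (fun w : Fin k ⊕ Fin k → Fin n => cond w)).card
      ≤ n ^ k * k.factorial := by
  have := Finset.card_le_mul_card_image (f := fun w : Fin k ⊕ Fin k → Fin n => w ∘ Sum.inl)
    (Finset.univ.filter (fun w : Fin k ⊕ Fin k → Fin n => cond w)) (k.factorial) ?_
  · refine this.trans ?_
    rw [Nat.mul_comm]
    apply mul_le_mul_left
    calc _ ≤ (Finset.univ : Finset (Fin k → Fin n)).card := Finset.card_le_card (by simp)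
      _ = n ^ k := by simp [Fintype.card_fun]
  · intro u _
    refine le_trans (Finset.card_le_card_of_injOn (fun w => w ∘ Sum.inr)
      (t := Finset.univ.filter (fun v : Fin k → Fin n => tmul v = tmul u)) ?_ ?_)
      (card_rearr u)
    · intro w hw
      simp only [Finset.mem_coe, Finset.mem_filter, Finset.mem_univ, true_and] at hw ⊢
      obtain ⟨hc, he⟩ := hw
      rw [← he]
      exact hc.symm
    · intro w₁ h₁ w₂ h₂ hr
      simp only [Finset.coe_filter, Set.mem_setOf_eq, Finset.mem_univ, true_and] at h₁ h₂
      funext x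
      cases x with
      | inl a => exact congrFun (h₁.2.trans h₂.2.symm) a
      | inr a => exact congrFun hr a

lemma card_emb_fiber (y : Fin (n * d) → Fin n)
    (hy : ∀ v, (Finset.univ.filter (fun i => y i = v)).card = d)
    (w : Fin k ⊕ Fin k → Fin n) :
    (Finset.univ.filter (fun e : Fin k ⊕ Fin k ↪ Fin (n * d) => y ∘ ⇑e = w)).card
      ≤ d ^ (2 * k) := by
  classical
  have hcard : Fintype.card (∀ l : Fin k ⊕ Fin k, {x : Fin (n * d) // y x = w l})
      = d ^ (2 * k) := by
    rw [Fintype.card_pi]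
    have h1 : ∀ l : Fin k ⊕ Fin k, Fintype.card {x : Fin (n * d) // y x = w l} = d := by
      intro l
      rw [Fintype.card_subtype]
      exact hy (w l)
    simp only [h1, Finset.prod_const, Finset.card_univ]
    simp [Fintype.card_sum, two_mul]
  have ht : (Finset.univ.filter
      (fun g : Fin k ⊕ Fin k → Fin (n * d) => ∀ l, y (g l) = w l)).card = d ^ (2 * k) := by
    rw [← Fintype.card_subtype, ← hcard]
    exact Fintype.card_congr (Equiv.subtypePiEquivPi (p := fun l x => y x = w l))
  rw [← ht]
  apply Finset.card_le_card_of_injOn (fun e : Fin k ⊕ Fin k ↪ Fin (n * d) => ⇑e)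
  · intro e he
    simp only [Finset.mem_coe, Finset.mem_filter, Finset.mem_univ, true_and] at he ⊢
    intro l; exact congrFun he l
  · intro e₁ _ e₂ _ h
    exact DFunLike.coe_injective h

lemma per_y (y : Fin (n * d) → Fin n)
    (hy : ∀ v, (Finset.univ.filter (fun i => y i = v)).card = d) :
    (Finset.univ.filter (fun e : Fin k ⊕ Fin k ↪ Fin (n * d) => cond (y ∘ ⇑e))).card
      ≤ d ^ (2 * k) * (n ^ k * k.factorial) := by
  classical
  have := Finset.card_le_mul_card_image (f := fun e : Fin k ⊕ Fin k ↪ Fin (n * d) => y ∘ ⇑e)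
    (Finset.univ.filter (fun e : Fin k ⊕ Fin k ↪ Fin (n * d) => cond (y ∘ ⇑e)))
    (d ^ (2 * k)) ?_
  · refine this.trans ?_
    apply mul_le_mul_right
    refine le_trans (Finset.card_le_card ?_) card_cond_words
    intro w hw
    simp only [Finset.mem_image, Finset.mem_filter, Finset.mem_univ, true_and] at hw ⊢
    obtain ⟨e, hc, he⟩ := hw
    rw [← he]; exact hc
  · intro w _
    refine le_trans (Finset.card_le_card ?_) (card_emb_fiber y hy w)
    intro e he
    simp only [Finset.mem_filter, Finset.mem_univ, true_and] at he ⊢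
    exact he.2

lemma comp_mem_permSet {y : Fin (n * d) → Fin n} (hy : y ∈ permSet n d)
    (π : Equiv.Perm (Fin (n * d))) : y ∘ ⇑π ∈ permSet n d := by
  simp only [permSet, Finset.mem_filter, Finset.mem_univ, true_and] at hy ⊢
  intro v
  have := Finset.card_equiv (s := Finset.univ.filter (fun i => (y ∘ ⇑π) i = v))
    (t := Finset.univ.filter (fun i => y i = v)) π (fun a => by simp)
  rw [this, hy v]

lemma symm_count (e₀ e : Fin k ⊕ Fin k ↪ Fin (n * d)) :
    ((permSet n d).filter (fun y => cond (y ∘ ⇑e₀))).card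
      = ((permSet n d).filter (fun y => cond (y ∘ ⇑e))).card := by
  classical
  obtain ⟨π, hπ⟩ : ∃ π : Equiv.Perm (Fin (n * d)), ∀ l, π (e₀ l) = e l := by
    let q : {x // x ∈ Set.range ⇑e₀} ≃ {x // x ∈ Set.range ⇑e} :=
      (Equiv.ofInjective _ e₀.injective).symm.trans (Equiv.ofInjective _ e.injective)
    refine ⟨q.extendSubtype, fun l => ?_⟩
    have hx : (e₀ l) ∈ Set.range ⇑e₀ := ⟨l, rfl⟩
    rw [Equiv.extendSubtype_apply_of_mem q _ hx]
    simp only [q, Equiv.trans_apply]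
    have : (Equiv.ofInjective _ e₀.injective).symm ⟨e₀ l, hx⟩ = l :=
      Equiv.ofInjective_symm_apply e₀.injective l
    rw [this]
    rfl
  symm
  apply Finset.card_bij' (fun y _ => y ∘ ⇑π) (fun y _ => y ∘ ⇑π.symm)
  · intro y hy
    simp only [Finset.mem_filter] at hy ⊢
    refine ⟨comp_mem_permSet hy.1 π, ?_⟩
    have : (y ∘ ⇑π) ∘ ⇑e₀ = y ∘ ⇑e := by
      funext l; simp [Function.comp, hπ l]
    rw [this]
    exact hy.2
  · intro y hy
    simp only [Finset.mem_filter] at hy ⊢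
    refine ⟨comp_mem_permSet hy.1 π.symm, ?_⟩
    have : (y ∘ ⇑π.symm) ∘ ⇑e = y ∘ ⇑e₀ := by
      funext l
      simp only [Function.comp_apply]
      rw [← hπ l, Equiv.symm_apply_apply]
    rw [this]
    exact hy.2
  · intro y _; funext x; simp
  · intro y _; funext x; simp

lemma key (e₀ : Fin k ⊕ Fin k ↪ Fin (n * d)) :
    ((permSet n d).filter (fun y => cond (y ∘ ⇑e₀))).card * (n * d).descFactorial (2 * k)
      ≤ (permSet n d).card * (d ^ (2 * k) * (n ^ k * k.factorial)) := by
  classical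
  have hT : (Finset.univ : Finset (Fin k ⊕ Fin k ↪ Fin (n * d))).card
      = (n * d).descFactorial (2 * k) := by
    rw [Finset.card_univ, Fintype.card_embedding_eq]
    simp [Fintype.card_sum, Fintype.card_fin, two_mul]
  have hsum : ∑ e ∈ (Finset.univ : Finset (Fin k ⊕ Fin k ↪ Fin (n * d))),
        ((permSet n d).filter (fun y => cond (y ∘ ⇑e))).card
      = (n * d).descFactorial (2 * k)
        * ((permSet n d).filter (fun y => cond (y ∘ ⇑e₀))).card := by
    rw [Finset.sum_congr rfl (fun e _ => (symm_count e₀ e).symm), Finset.sum_const,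
      smul_eq_mul, hT]
  have hswap : ∑ e ∈ (Finset.univ : Finset (Fin k ⊕ Fin k ↪ Fin (n * d))),
        ((permSet n d).filter (fun y => cond (y ∘ ⇑e))).card
      = ∑ y ∈ permSet n d,
          (Finset.univ.filter (fun e : Fin k ⊕ Fin k ↪ Fin (n * d) => cond (y ∘ ⇑e))).card := by
    simp_rw [Finset.card_filter]
    rw [Finset.sum_comm]
  have hbound : ∑ y ∈ permSet n d,
        (Finset.univ.filter (fun e : Fin k ⊕ Fin k ↪ Fin (n * d) => cond (y ∘ ⇑e))).card
      ≤ (permSet n d).card * (d ^ (2 * k) * (n ^ k * k.factorial)) := by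
    have := Finset.sum_le_card_nsmul (permSet n d)
      (fun y => (Finset.univ.filter
        (fun e : Fin k ⊕ Fin k ↪ Fin (n * d) => cond (y ∘ ⇑e))).card)
      (d ^ (2 * k) * (n ^ k * k.factorial)) ?_
    · simpa using this
    · intro y hy
      apply per_y
      simpa [permSet] using hy
  calc ((permSet n d).filter (fun y => cond (y ∘ ⇑e₀))).card * (n * d).descFactorial (2 * k)
      = (n * d).descFactorial (2 * k)
        * ((permSet n d).filter (fun y => cond (y ∘ ⇑e₀))).card := Nat.mul_comm _ _
    _ = _ := hsum.symm
    _ = _ := hswap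
    _ ≤ _ := hbound

lemma edge_eq {n d k i : ℕ} (h : ∀ l, l < k → k * i + l < n * d) (y : Fin (n * d) → Fin n) :
    edgeOf k y i = tmul (fun l : Fin k => y ⟨k * i + l, h l l.isLt⟩) := by
  set u : Fin k → Fin n := fun l : Fin k => y ⟨k * i + l, h l l.isLt⟩ with hu
  set f : ℕ → Option (Fin n) :=
    (fun j => if h : k * i + j < n * d then some (y ⟨k * i + j, h⟩) else none) with hf
  have h1 : edgeOf k y i = ((List.range k).filterMap f : Multiset (Fin n)) := by
    rw [edgeOf, Finset.range_val, ← Multiset.coe_range]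
    rfl
  rw [h1, ← ofFn_tmul]
  congr 1
  rw [← List.map_coe_finRange_eq_range, List.filterMap_map, List.ofFn_eq_map]
  rw [← List.filterMap_eq_map (f := u)]
  apply List.filterMap_congr
  intro a _
  simp only [Function.comp_apply, hf, hu, dif_pos (h a.val a.isLt)]

end Stmt2Aux

/-- For a uniformly random permutation `Y` of the multiset with `d` copies of each element
of `[n]`, and two fixed distinct edge positions `i ≠ j`, the probability that the `i`-th
and `j`-th edges of `Y` are identical as multisets is at most
`(k!)^2 * n^k * d^(2k) / (nd)_{2k}`. -/
theorem stmt2 (n d k m : ℕ) (hk : 2 ≤ k) (hn : 1 ≤ n) (hd : 1 ≤ d) (hm : n * d = k * m)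
    (hm2 : 2 ≤ m) (i j : ℕ) (hi : i < m) (hj : j < m) (hij : i ≠ j) :
    (((permSet n d).filter (fun y => edgeOf k y i = edgeOf k y j)).card : ℝ)
        / ((permSet n d).card : ℝ)
      ≤ ((Nat.factorial k : ℝ)) ^ 2 * (n : ℝ) ^ k * (d : ℝ) ^ (2 * k)
        / ((n * d).descFactorial (2 * k) : ℝ) := by
  classical
  open Stmt2Aux in
  -- block bounds
  have hblock : ∀ a : ℕ, a < m → ∀ l, l < k → k * a + l < n * d := by
    intro a ha l hl
    have h1 : k * (a + 1) ≤ k * m := Nat.mul_le_mul_left k (Nat.succ_le_of_lt ha)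
    rw [Nat.mul_succ] at h1
    omega
  have hbi := hblock i hi
  have hbj := hblock j hj
  -- the embedding of the two blocks
  have hdisj : ∀ a b : Fin k, (k * i + (a : ℕ)) ≠ k * j + (b : ℕ) := by
    intro a b hab
    rcases Nat.lt_or_ge i j with h | h
    · have h1 : k * (i + 1) ≤ k * j := Nat.mul_le_mul_left k (Nat.succ_le_of_lt h)
      rw [Nat.mul_succ] at h1
      have := a.isLt
      omega
    · have h2 : j < i := lt_of_le_of_ne h (Ne.symm hij)
      have h1 : k * (j + 1) ≤ k * i := Nat.mul_le_mul_left k (Nat.succ_le_of_lt h2)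
      rw [Nat.mul_succ] at h1
      have := b.isLt
      omega
  let e₀ : Fin k ⊕ Fin k ↪ Fin (n * d) :=
    ⟨Sum.elim (fun l : Fin k => ⟨k * i + l, hbi l l.isLt⟩)
      (fun l : Fin k => ⟨k * j + l, hbj l l.isLt⟩), by
      intro x y hxy
      cases x with
      | inl a => cases y with
        | inl b =>
          simp only [Sum.elim_inl, Fin.mk.injEq] at hxy
          have : a = b := Fin.ext (by omega)
          rw [this]
        | inr b =>
          simp only [Sum.elim_inl, Sum.elim_inr, Fin.mk.injEq] at hxy
          exact absurd hxy (hdisj a b)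
      | inr a => cases y with
        | inl b =>
          simp only [Sum.elim_inl, Sum.elim_inr, Fin.mk.injEq] at hxy
          exact absurd hxy.symm (hdisj b a)
        | inr b =>
          simp only [Sum.elim_inr, Fin.mk.injEq] at hxy
          have : a = b := Fin.ext (by omega)
          rw [this]⟩
  -- identify the two filters
  have hfilter : (permSet n d).filter (fun y => edgeOf k y i = edgeOf k y j)
      = (permSet n d).filter (fun y => cond (y ∘ ⇑e₀)) := by
    apply Finset.filter_congr
    intro y _
    rw [edge_eq hbi y, edge_eq hbj y]
    exact Iff.rfl
  have hkey := Stmt2Aux.key (n := n) (d := d) (k := k) e₀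
  rw [← hfilter] at hkey
  -- positivity facts
  have hD : 0 < (n * d).descFactorial (2 * k) := by
    apply Nat.pos_of_ne_zero
    intro h0
    rw [Nat.descFactorial_eq_zero_iff_lt] at h0
    have : k * 2 ≤ k * m := Nat.mul_le_mul_left k hm2
    omega
  by_cases hP : (permSet n d).card = 0
  · have : ((permSet n d).filter (fun y => edgeOf k y i = edgeOf k y j)).card = 0 := by
      have := Finset.card_le_card (Finset.filter_subset
        (fun y => edgeOf k y i = edgeOf k y j) (permSet n d))
      omega
    rw [this, hP]
    simp only [Nat.cast_zero, zero_div]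
    positivity
  · have hPpos : 0 < (permSet n d).card := Nat.pos_of_ne_zero hP
    rw [div_le_div_iff₀ (by exact_mod_cast hPpos) (by exact_mod_cast hD)]
    have hcast : (((permSet n d).filter (fun y => edgeOf k y i = edgeOf k y j)).card : ℝ)
          * ((n * d).descFactorial (2 * k) : ℝ)
        ≤ ((permSet n d).card : ℝ)
          * ((d : ℝ) ^ (2 * k) * ((n : ℝ) ^ k * (Nat.factorial k : ℝ))) := by
      exact_mod_cast hkey
    refine hcast.trans ?_
    have h1k : (1 : ℝ) ≤ (Nat.factorial k : ℝ) := by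
      exact_mod_cast Nat.one_le_iff_ne_zero.mpr (Nat.factorial_ne_zero k)
    have hnn : (0 : ℝ) ≤ ((permSet n d).card : ℝ) := by positivity
    rw [show ((Nat.factorial k : ℝ)) ^ 2 * (n : ℝ) ^ k * (d : ℝ) ^ (2 * k)
        * ((permSet n d).card : ℝ)
      = ((permSet n d).card : ℝ)
        * ((d : ℝ) ^ (2 * k) * ((n : ℝ) ^ k
          * ((Nat.factorial k : ℝ) * (Nat.factorial k : ℝ)))) from by ring]
    apply mul_le_mul_of_nonneg_left _ hnn
    apply mul_le_mul_of_nonneg_left _ (by positivity)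
    apply mul_le_mul_of_nonneg_left _ (by positivity)
    nlinarith
end

section
/- If Y is a uniformly random permutation of the multiset with d copies of each element of [n], d ≥ 2, then the probability that a fixed edge of Y contains at least two distinct vertices each of multiplicity at least 2 is at most k^4 * n^2 * ((d)_2)^2 / (nd)_4. -/
open Finset

lemma aux_perm_comp_mem {n d : ℕ} (σ : Equiv.Perm (Fin (n*d))) {y : Fin (n*d) → Fin n}
    (hy : y ∈ permSet n d) : (y ∘ σ) ∈ permSet n d := by
  simp only [permSet, mem_filter, mem_univ, true_and] at hy ⊢
  intro v
  have key : #(filter (fun i => (y ∘ σ) i = v) univ) = #(filter (fun i => y i = v) univ) := by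
    apply Finset.card_bij (fun x _ => σ x)
    · intro a ha
      simp only [mem_filter, mem_univ, true_and, Function.comp] at ha ⊢
      exact ha
    · exact fun a₁ _ a₂ _ h => σ.injective h
    · intro b hb
      simp only [mem_filter, mem_univ, true_and, Function.comp] at hb ⊢
      exact ⟨σ.symm b, by simpa using hb, by simp⟩
  rw [key, hy v]

lemma aux_exists_perm {α : Type*} [Fintype α] [DecidableEq α] {r : ℕ}
    (s t : Fin r → α) (hs : Function.Injective s) (ht : Function.Injective t) :
    ∃ π : Equiv.Perm α, ∀ j, π (s j) = t j := by
  classical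
  let e : {x // x ∈ Set.range s} ≃ {x // x ∈ Set.range t} :=
    (Equiv.ofInjective s hs).symm.trans (Equiv.ofInjective t ht)
  refine ⟨e.extendSubtype, fun j => ?_⟩
  have h1 : s j ∈ Set.range s := ⟨j, rfl⟩
  rw [Equiv.extendSubtype_apply_of_mem e (s j) h1]
  have h2 : (⟨s j, h1⟩ : {x // x ∈ Set.range s}) = Equiv.ofInjective s hs j := rfl
  rw [h2]
  show ↑((Equiv.ofInjective t ht) ((Equiv.ofInjective s hs).symm (Equiv.ofInjective s hs j))) = t j
  rw [Equiv.symm_apply_apply]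
  rfl

lemma aux_df2 (d : ℕ) : d.descFactorial 2 = d * d - d := by
  cases d with
  | zero => rfl
  | succ e =>
    show (e + 1 - 1) * ((e + 1 - 0) * 1) = _
    simp [Nat.succ_mul, Nat.mul_succ]

lemma aux_cardA_eq {n d : ℕ} (v w : Fin n) (a b c e a' b' c' e' : Fin (n*d))
    (hab : a ≠ b) (hce : c ≠ e) (hac : a ≠ c) (hae : a ≠ e) (hbc : b ≠ c) (hbe : b ≠ e)
    (hab' : a' ≠ b') (hce' : c' ≠ e') (hac' : a' ≠ c') (hae' : a' ≠ e') (hbc' : b' ≠ c')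
    (hbe' : b' ≠ e') :
    ((permSet n d).filter fun y => y a = v ∧ y b = v ∧ y c = w ∧ y e = w).card =
    ((permSet n d).filter fun y => y a' = v ∧ y b' = v ∧ y c' = w ∧ y e' = w).card := by
  have hs : Function.Injective ![a, b, c, e] := by
    intro x y hxy
    fin_cases x <;> fin_cases y <;> simp_all
  have hs' : Function.Injective ![a', b', c', e'] := by
    intro x y hxy
    fin_cases x <;> fin_cases y <;> simp_all
  obtain ⟨π, hπ⟩ := aux_exists_perm ![a', b', c', e'] ![a, b, c, e] hs' hs
  have h0 : π a' = a := by simpa using hπ 0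
  have h1 : π b' = b := by simpa using hπ 1
  have h2 : π c' = c := by simpa using hπ 2
  have h3 : π e' = e := by simpa using hπ 3
  have g0 : π.symm a = a' := by rw [← h0, Equiv.symm_apply_apply]
  have g1 : π.symm b = b' := by rw [← h1, Equiv.symm_apply_apply]
  have g2 : π.symm c = c' := by rw [← h2, Equiv.symm_apply_apply]
  have g3 : π.symm e = e' := by rw [← h3, Equiv.symm_apply_apply]
  refine Finset.card_bij' (fun y _ => y ∘ π) (fun y _ => y ∘ π.symm) ?_ ?_ ?_ ?_
  · intro y hy
    rw [Finset.mem_filter] at hy ⊢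
    exact ⟨aux_perm_comp_mem π hy.1, by
      simpa only [Function.comp_apply, h0, h1, h2, h3] using hy.2⟩
  · intro y hy
    rw [Finset.mem_filter] at hy ⊢
    exact ⟨aux_perm_comp_mem π.symm hy.1, by
      simpa only [Function.comp_apply, g0, g1, g2, g3] using hy.2⟩
  · intro y _; funext x; simp
  · intro y _; funext x; simp

lemma aux_sum_count {n d : ℕ} (v w : Fin n) :
    (∑ q ∈ ((Finset.univ : Finset (Fin (n*d))).offDiag ×ˢ (Finset.univ : Finset (Fin (n*d))).offDiag),
      ((permSet n d).filter fun y => y q.1.1 = v ∧ y q.1.2 = v ∧ y q.2.1 = w ∧ y q.2.2 = w).card)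
    = (d.descFactorial 2)^2 * (permSet n d).card := by
  have key : ∀ y ∈ permSet n d,
      ((((Finset.univ : Finset (Fin (n*d))).offDiag ×ˢ (Finset.univ : Finset (Fin (n*d))).offDiag).filter
        (fun q => y q.1.1 = v ∧ y q.1.2 = v ∧ y q.2.1 = w ∧ y q.2.2 = w)).card)
      = (d.descFactorial 2)^2 := by
    intro y hy
    have hy' : ∀ u, (Finset.univ.filter fun i => y i = u).card = d := by
      simpa [permSet] using hy
    have hsplit : (((Finset.univ : Finset (Fin (n*d))).offDiag ×ˢ (Finset.univ : Finset (Fin (n*d))).offDiag).filter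
          (fun q => y q.1.1 = v ∧ y q.1.2 = v ∧ y q.2.1 = w ∧ y q.2.2 = w))
        = ((Finset.univ : Finset (Fin (n*d))).offDiag.filter fun p => y p.1 = v ∧ y p.2 = v) ×ˢ
          ((Finset.univ : Finset (Fin (n*d))).offDiag.filter fun p => y p.1 = w ∧ y p.2 = w) := by
      rw [← Finset.filter_product]
      apply Finset.filter_congr
      intro q _
      tauto
    rw [hsplit, Finset.card_product]
    have hoff : ∀ u : Fin n, (Finset.univ : Finset (Fin (n*d))).offDiag.filter
        (fun p => y p.1 = u ∧ y p.2 = u) = (Finset.univ.filter fun x => y x = u).offDiag := by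
      intro u
      ext p
      simp only [Finset.mem_offDiag, Finset.mem_filter, Finset.mem_univ, true_and]
      tauto
    rw [hoff v, hoff w, Finset.offDiag_card, Finset.offDiag_card, hy' v, hy' w, aux_df2, sq]
  calc (∑ q ∈ ((Finset.univ : Finset (Fin (n*d))).offDiag ×ˢ (Finset.univ : Finset (Fin (n*d))).offDiag),
      ((permSet n d).filter fun y => y q.1.1 = v ∧ y q.1.2 = v ∧ y q.2.1 = w ∧ y q.2.2 = w).card)
      = ∑ q ∈ ((Finset.univ : Finset (Fin (n*d))).offDiag ×ˢ (Finset.univ : Finset (Fin (n*d))).offDiag),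
          ∑ y ∈ permSet n d, if y q.1.1 = v ∧ y q.1.2 = v ∧ y q.2.1 = w ∧ y q.2.2 = w then 1 else 0 := by
        refine Finset.sum_congr rfl fun q _ => ?_
        rw [Finset.card_filter]
    _ = ∑ y ∈ permSet n d, ∑ q ∈ ((Finset.univ : Finset (Fin (n*d))).offDiag ×ˢ (Finset.univ : Finset (Fin (n*d))).offDiag),
          if y q.1.1 = v ∧ y q.1.2 = v ∧ y q.2.1 = w ∧ y q.2.2 = w then 1 else 0 := Finset.sum_comm
    _ = ∑ y ∈ permSet n d, (d.descFactorial 2)^2 := by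
        refine Finset.sum_congr rfl fun y hy => ?_
        rw [← Finset.card_filter]
        exact key y hy
    _ = (d.descFactorial 2)^2 * (permSet n d).card := by
        rw [Finset.sum_const, smul_eq_mul, mul_comm]

lemma aux_keybound {n d : ℕ} (v w : Fin n) (a b c e : Fin (n * d))
    (hab : a ≠ b) (hce : c ≠ e) (hac : a ≠ c) (hae : a ≠ e) (hbc : b ≠ c) (hbe : b ≠ e) :
    ((permSet n d).filter fun y => y a = v ∧ y b = v ∧ y c = w ∧ y e = w).card
      * (n * d).descFactorial 4
    ≤ (d.descFactorial 2)^2 * (permSet n d).card := by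
  classical
  set A := ((permSet n d).filter fun y => y a = v ∧ y b = v ∧ y c = w ∧ y e = w).card with hA
  set D := (((Finset.univ : Finset (Fin (n*d))).offDiag ×ˢ (Finset.univ : Finset (Fin (n*d))).offDiag).filter
      (fun q => q.1.1 ≠ q.2.1 ∧ q.1.1 ≠ q.2.2 ∧ q.1.2 ≠ q.2.1 ∧ q.1.2 ≠ q.2.2)) with hD
  have hDcard : (n * d).descFactorial 4 ≤ D.card := by
    have hemb := Fintype.card_embedding_eq (α := Fin 4) (β := Fin (n*d))
    rw [Fintype.card_fin, Fintype.card_fin] at hemb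
    rw [← hemb, ← Finset.card_univ]
    apply Finset.card_le_card_of_injOn (fun f => ((f 0, f 1), (f 2, f 3)))
    · intro f _
      simp only [hD, Finset.mem_coe, Finset.mem_filter, Finset.mem_product, Finset.mem_offDiag,
        Finset.mem_univ, true_and]
      refine ⟨⟨f.injective.ne (by decide), f.injective.ne (by decide)⟩,
        f.injective.ne (by decide), f.injective.ne (by decide),
        f.injective.ne (by decide), f.injective.ne (by decide)⟩
    · intro f _ g _ hfg
      simp only [Prod.mk.injEq] at hfg
      apply Function.Embedding.ext
      intro j
      fin_cases j
      · exact hfg.1.1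
      · exact hfg.1.2
      · exact hfg.2.1
      · exact hfg.2.2
  have hcongr : ∀ q ∈ D,
      ((permSet n d).filter fun y => y q.1.1 = v ∧ y q.1.2 = v ∧ y q.2.1 = w ∧ y q.2.2 = w).card
      = A := by
    intro q hq
    simp only [hD, Finset.mem_filter, Finset.mem_product, Finset.mem_offDiag,
      Finset.mem_univ, true_and] at hq
    obtain ⟨⟨h12, h34⟩, h13, h14, h23, h24⟩ := hq
    exact aux_cardA_eq v w q.1.1 q.1.2 q.2.1 q.2.2 a b c e h12 h34 h13 h14 h23 h24
      hab hce hac hae hbc hbe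
  calc A * (n * d).descFactorial 4 ≤ A * D.card := Nat.mul_le_mul_left A hDcard
    _ = ∑ q ∈ D,
        ((permSet n d).filter fun y => y q.1.1 = v ∧ y q.1.2 = v ∧ y q.2.1 = w ∧ y q.2.2 = w).card := by
        rw [Finset.sum_congr rfl hcongr, Finset.sum_const, smul_eq_mul]
        exact Nat.mul_comm A D.card
    _ ≤ ∑ q ∈ ((Finset.univ : Finset (Fin (n*d))).offDiag ×ˢ (Finset.univ : Finset (Fin (n*d))).offDiag),
        ((permSet n d).filter fun y => y q.1.1 = v ∧ y q.1.2 = v ∧ y q.2.1 = w ∧ y q.2.2 = w).card := by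
        apply Finset.sum_le_sum_of_subset
        rw [hD]
        exact Finset.filter_subset _ _
    _ = (d.descFactorial 2)^2 * (permSet n d).card := aux_sum_count v w

lemma aux_pos_lt {n d k m i : ℕ} (hm : n * d = k * m) (hi : i < m) (j : Fin k) :
    k * i + (j : ℕ) < n * d := by
  have h1 : (j : ℕ) < k := j.2
  calc k * i + (j : ℕ) < k * (i + 1) := by rw [Nat.mul_succ]; omega
    _ ≤ k * m := Nat.mul_le_mul_left k hi
    _ = n * d := hm.symm

def auxPos (n d k m i : ℕ) (hm : n * d = k * m) (hi : i < m) (j : Fin k) : Fin (n * d) :=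
  ⟨k * i + (j : ℕ), aux_pos_lt hm hi j⟩

lemma aux_pos_inj {n d k m i : ℕ} (hm : n * d = k * m) (hi : i < m) :
    Function.Injective (auxPos n d k m i hm hi) := by
  intro j j' h
  have := congrArg Fin.val h
  simp only [auxPos] at this
  exact Fin.ext (by omega)

lemma aux_count_edge {n d k m i : ℕ} (hm : n * d = k * m) (hi : i < m)
    (y : Fin (n * d) → Fin n) (v : Fin n) :
    (edgeOf k y i).count v
      = ((Finset.univ : Finset (Fin k)).filter fun j => y (auxPos n d k m i hm hi j) = v).card := by
  rw [edgeOf]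
  have hval : (Finset.range k).val
      = (Finset.univ : Finset (Fin k)).val.map Fin.val := by
    rw [← Nat.Iio_eq_range, ← Fin.map_valEmbedding_univ, Finset.map_val]
    rfl
  rw [hval, Multiset.filterMap_map]
  have hfm : ((fun j => if h : k * i + j < n * d then some (y ⟨k * i + j, h⟩) else none) ∘ Fin.val)
      = (some ∘ fun j : Fin k => y (auxPos n d k m i hm hi j)) := by
    funext j
    simp only [Function.comp_apply]
    rw [dif_pos (aux_pos_lt hm hi j)]
    rfl
  rw [hfm, Multiset.filterMap_eq_map, Multiset.count_map]
  have : Multiset.filter (fun j => v = y (auxPos n d k m i hm hi j)) (Finset.univ : Finset (Fin k)).val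
       = Multiset.filter (fun j => y (auxPos n d k m i hm hi j) = v) (Finset.univ : Finset (Fin k)).val := by
    apply Multiset.filter_congr
    intro x _
    constructor <;> exact Eq.symm
  rw [this]
  rfl

/-- For a uniformly random permutation `Y` of the multiset with `d` copies of each element
of `[n]` (`d ≥ 2`), the probability that a fixed edge of `Y` contains at least two distinct
vertices, each of multiplicity at least 2, is at most `k^4 * n^2 * ((d)_2)^2 / (nd)_4`. -/
theorem stmt4 (n d k m : ℕ) (hk : 2 ≤ k) (hn : 1 ≤ n) (hd : 2 ≤ d) (hm : n * d = k * m)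
    (i : ℕ) (hi : i < m) :
    (((permSet n d).filter (fun y => ∃ v w, v ≠ w ∧
        2 ≤ (edgeOf k y i).count v ∧ 2 ≤ (edgeOf k y i).count w)).card : ℝ)
        / ((permSet n d).card : ℝ)
      ≤ (k : ℝ) ^ 4 * (n : ℝ) ^ 2 * (d.descFactorial 2 : ℝ) ^ 2
        / ((n * d).descFactorial 4 : ℝ) := by
  classical
  by_cases h4 : n * d < 4
  · have hBad : (permSet n d).filter (fun y => ∃ v w, v ≠ w ∧
        2 ≤ (edgeOf k y i).count v ∧ 2 ≤ (edgeOf k y i).count w) = ∅ := by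
      rw [Finset.filter_eq_empty_iff]
      rintro y _ ⟨v, w, hvw, hv, hw⟩
      rw [aux_count_edge hm hi] at hv hw
      have hdisj : Disjoint
          ((Finset.univ : Finset (Fin k)).filter fun j => y (auxPos n d k m i hm hi j) = v)
          ((Finset.univ : Finset (Fin k)).filter fun j => y (auxPos n d k m i hm hi j) = w) := by
        rw [Finset.disjoint_left]
        intro j hj hj'
        rw [Finset.mem_filter] at hj hj'
        exact hvw (by rw [← hj.2, hj'.2])
      have hun := Finset.card_union_of_disjoint hdisj
      have hle : ((Finset.univ : Finset (Fin k)).filter fun j => y (auxPos n d k m i hm hi j) = v).card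
          + ((Finset.univ : Finset (Fin k)).filter fun j => y (auxPos n d k m i hm hi j) = w).card
          ≤ k := by
        rw [← hun]
        calc _ ≤ (Finset.univ : Finset (Fin k)).card := Finset.card_le_univ _
          _ = k := by simp
      have h1m : 1 ≤ m := by omega
      have hkN : k ≤ n * d := by
        calc k = k * 1 := (Nat.mul_one k).symm
          _ ≤ k * m := Nat.mul_le_mul_left k h1m
          _ = n * d := hm.symm
      omega
    rw [hBad]
    simp only [Finset.card_empty, Nat.cast_zero, zero_div]
    positivity
  · have hNat : ((permSet n d).filter (fun y => ∃ v w, v ≠ w ∧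
        2 ≤ (edgeOf k y i).count v ∧ 2 ≤ (edgeOf k y i).count w)).card * (n * d).descFactorial 4
        ≤ k ^ 4 * n ^ 2 * (d.descFactorial 2) ^ 2 * (permSet n d).card := by
      set S : (Fin n × Fin n) × (Fin k × Fin k) × (Fin k × Fin k) → Finset (Fin (n * d) → Fin n) :=
        fun q => if q.2.1.1 ≠ q.2.1.2 ∧ q.2.2.1 ≠ q.2.2.2 ∧ q.2.1.1 ≠ q.2.2.1 ∧ q.2.1.1 ≠ q.2.2.2
            ∧ q.2.1.2 ≠ q.2.2.1 ∧ q.2.1.2 ≠ q.2.2.2 then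
          (permSet n d).filter (fun y =>
            y (auxPos n d k m i hm hi q.2.1.1) = q.1.1 ∧
            y (auxPos n d k m i hm hi q.2.1.2) = q.1.1 ∧
            y (auxPos n d k m i hm hi q.2.2.1) = q.1.2 ∧
            y (auxPos n d k m i hm hi q.2.2.2) = q.1.2)
        else ∅ with hS
      have hsub : (permSet n d).filter (fun y => ∃ v w, v ≠ w ∧
          2 ≤ (edgeOf k y i).count v ∧ 2 ≤ (edgeOf k y i).count w)
          ⊆ (Finset.univ : Finset ((Fin n × Fin n) × (Fin k × Fin k) × (Fin k × Fin k))).biUnion S := by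
        intro y hy
        rw [Finset.mem_filter] at hy
        obtain ⟨hyP, v, w, hvw, hv, hw⟩ := hy
        rw [aux_count_edge hm hi] at hv hw
        obtain ⟨j1, hj1, j2, hj2, hj12⟩ := Finset.one_lt_card.mp hv
        obtain ⟨j3, hj3, j4, hj4, hj34⟩ := Finset.one_lt_card.mp hw
        rw [Finset.mem_filter] at hj1 hj2 hj3 hj4
        have h13 : j1 ≠ j3 := fun h => hvw (by rw [← hj1.2, h, hj3.2])
        have h14 : j1 ≠ j4 := fun h => hvw (by rw [← hj1.2, h, hj4.2])
        have h23 : j2 ≠ j3 := fun h => hvw (by rw [← hj2.2, h, hj3.2])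
        have h24 : j2 ≠ j4 := fun h => hvw (by rw [← hj2.2, h, hj4.2])
        rw [Finset.mem_biUnion]
        refine ⟨((v, w), (j1, j2), (j3, j4)), Finset.mem_univ _, ?_⟩
        simp only [hS]
        rw [if_pos ⟨hj12, hj34, h13, h14, h23, h24⟩]
        exact Finset.mem_filter.mpr ⟨hyP, hj1.2, hj2.2, hj3.2, hj4.2⟩
      have hterm : ∀ q : (Fin n × Fin n) × (Fin k × Fin k) × (Fin k × Fin k),
          (S q).card * (n * d).descFactorial 4
          ≤ (d.descFactorial 2) ^ 2 * (permSet n d).card := by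
        intro q
        simp only [hS]
        split_ifs with hq
        · obtain ⟨h12, h34, h13, h14, h23, h24⟩ := hq
          have hinj := aux_pos_inj (n := n) (d := d) hm hi
          exact aux_keybound q.1.1 q.1.2 _ _ _ _
            (fun h => h12 (hinj h)) (fun h => h34 (hinj h)) (fun h => h13 (hinj h))
            (fun h => h14 (hinj h)) (fun h => h23 (hinj h)) (fun h => h24 (hinj h))
        · simp
      calc ((permSet n d).filter (fun y => ∃ v w, v ≠ w ∧
            2 ≤ (edgeOf k y i).count v ∧ 2 ≤ (edgeOf k y i).count w)).card * (n * d).descFactorial 4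
          ≤ ((Finset.univ : Finset ((Fin n × Fin n) × (Fin k × Fin k) × (Fin k × Fin k))).biUnion S).card
              * (n * d).descFactorial 4 :=
            Nat.mul_le_mul_right _ (Finset.card_le_card hsub)
        _ ≤ (∑ q ∈ (Finset.univ : Finset ((Fin n × Fin n) × (Fin k × Fin k) × (Fin k × Fin k))), (S q).card)
              * (n * d).descFactorial 4 :=
            Nat.mul_le_mul_right _ Finset.card_biUnion_le
        _ = ∑ q ∈ (Finset.univ : Finset ((Fin n × Fin n) × (Fin k × Fin k) × (Fin k × Fin k))),
              (S q).card * (n * d).descFactorial 4 := by rw [Finset.sum_mul]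
        _ ≤ ∑ _q ∈ (Finset.univ : Finset ((Fin n × Fin n) × (Fin k × Fin k) × (Fin k × Fin k))),
              (d.descFactorial 2) ^ 2 * (permSet n d).card :=
            Finset.sum_le_sum fun q _ => hterm q
        _ = (Fintype.card ((Fin n × Fin n) × (Fin k × Fin k) × (Fin k × Fin k)))
              * ((d.descFactorial 2) ^ 2 * (permSet n d).card) := by
            rw [Finset.sum_const, smul_eq_mul, Finset.card_univ]
        _ = k ^ 4 * n ^ 2 * (d.descFactorial 2) ^ 2 * (permSet n d).card := by
            simp only [Fintype.card_prod, Fintype.card_fin]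
            ring
    by_cases hP : (permSet n d).card = 0
    · rw [hP]
      simp only [Nat.cast_zero, div_zero]
      positivity
    · have hN4 : 0 < (n * d).descFactorial 4 :=
        Nat.pos_of_ne_zero (fun h0 => absurd (Nat.descFactorial_eq_zero_iff_lt.mp h0) (by omega))
      rw [div_le_div_iff₀ (by exact_mod_cast Nat.pos_of_ne_zero hP) (by exact_mod_cast hN4)]
      exact_mod_cast hNat
end

section
/- Let λ(Y) denote the number of edges of Y that are simple loops (one vertex of multiplicity exactly 2, all others multiplicity 1 and distinct). Then E[λ(Y)] = (nd/k) * binom(k,2) * (n)_{k-1} * (d)_2 * d^{k-2} / (nd)_k, and consequently E[λ(Y)] → (k-1)(d-1)/2 as n → ∞ for fixed k ≥ 3 and fixed d. -/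
namespace Stmt6Aux
open Finset

/-- Transport along equal fiber cardinalities: a permutation matching fibers. -/
lemma exists_comp_eq {α γ : Type*} [Fintype α] [DecidableEq α] [DecidableEq γ] (f g : α → γ)
    (h : ∀ c, (univ.filter fun a => f a = c).card = (univ.filter fun a => g a = c).card) :
    ∃ e : Equiv.Perm α, ∀ a, g (e a) = f a := by
  exact ⟨Equiv.ofFiberEquiv (f := f) (g := g)
    (fun c => Fintype.equivOfCardEq (by simp only [Fintype.card_subtype]; exact h c)),
    fun a => Equiv.ofFiberEquiv_map _ a⟩

lemma card_eq_mul_of_fiber_const {α β : Type*} [DecidableEq β]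
    (s : Finset α) (t : Finset β) (Φ : α → β) (c : ℕ)
    (hmaps : ∀ a ∈ s, Φ a ∈ t)
    (hfib : ∀ b ∈ t, (s.filter fun a => Φ a = b).card = c) :
    s.card = t.card * c := by
  rw [Finset.card_eq_sum_card_fiberwise hmaps]
  rw [Finset.sum_congr rfl hfib, Finset.sum_const, smul_eq_mul]

lemma sum_comp_of_fiber_const {α β : Type*} [DecidableEq β]
    (s : Finset α) (t : Finset β) (Φ : α → β) (c : ℕ)
    (hmaps : ∀ a ∈ s, Φ a ∈ t)
    (hfib : ∀ b ∈ t, (s.filter fun a => Φ a = b).card = c)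
    (F : β → ℝ) : ∑ a ∈ s, F (Φ a) = c * ∑ b ∈ t, F b := by
  rw [← Finset.sum_fiberwise_of_maps_to hmaps]
  rw [Finset.mul_sum]
  refine Finset.sum_congr rfl fun b hb => ?_
  calc ∑ a ∈ s.filter fun a => Φ a = b, F (Φ a)
      = ∑ a ∈ s.filter fun a => Φ a = b, F b := by
        refine Finset.sum_congr rfl fun a ha => ?_
        rw [(Finset.mem_filter.mp ha).2]
    _ = c * F b := by rw [Finset.sum_const, hfib b hb, nsmul_eq_mul]


variable {n d k m : ℕ}

def proj (n d : ℕ) (i : Fin (n * d)) : Fin n :=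
  ⟨(i : ℕ) / d, by
    have h := i.2
    rcases Nat.eq_zero_or_pos d with h0 | h0
    · subst h0; simp at h
    · exact (Nat.div_lt_iff_lt_mul h0).mpr h⟩

lemma card_proj_fiber (hd : 0 < d) (v : Fin n) :
    (univ.filter (fun i : Fin (n * d) => proj n d i = v)).card = d := by
  have h : (univ.filter (fun i : Fin (n * d) => proj n d i = v)).card
      = (univ : Finset (Fin d)).card := by
    refine Finset.card_bij' (fun a _ => (⟨(a : ℕ) % d, Nat.mod_lt _ hd⟩ : Fin d))
      (fun b _ => (⟨(v : ℕ) * d + (b : ℕ), ?_⟩ : Fin (n * d))) (fun a ha => Finset.mem_univ _)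
      (fun b hb => ?_) (fun a ha => ?_) (fun b hb => ?_)
    · have hv := v.2
      have hb := b.2
      calc (v : ℕ) * d + (b : ℕ) < (v : ℕ) * d + d := by omega
        _ = ((v : ℕ) + 1) * d := by ring
        _ ≤ n * d := Nat.mul_le_mul_right d hv
    · simp only [Finset.mem_filter, Finset.mem_univ, true_and]
      apply Fin.ext
      show ((v : ℕ) * d + (b : ℕ)) / d = (v : ℕ)
      rw [Nat.mul_comm, Nat.mul_add_div hd]
      simp [Nat.div_eq_of_lt b.2]
    · simp only [Finset.mem_filter, Finset.mem_univ, true_and] at ha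
      apply Fin.ext
      have h1 : (a : ℕ) / d = (v : ℕ) := congrArg Fin.val ha
      have h2 := Nat.div_add_mod (a : ℕ) d
      show (v : ℕ) * d + (a : ℕ) % d = (a : ℕ)
      rw [Nat.mul_comm]
      rw [h1] at h2
      omega
    · apply Fin.ext
      show ((v : ℕ) * d + (b : ℕ)) % d = (b : ℕ)
      rw [Nat.mul_comm, Nat.mul_add_mod]
      exact Nat.mod_eq_of_lt b.2
  simpa using h

lemma proj_mem_permSet (hd : 0 < d) : proj n d ∈ permSet n d := by
  simp only [permSet, Finset.mem_filter, Finset.mem_univ, true_and]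
  exact fun v => card_proj_fiber hd v

lemma comp_perm_mem_permSet (hd : 0 < d) (σ : Equiv.Perm (Fin (n * d))) :
    proj n d ∘ σ ∈ permSet n d := by
  simp only [permSet, Finset.mem_filter, Finset.mem_univ, true_and]
  intro v
  have h : (univ.filter fun i : Fin (n * d) => (proj n d ∘ σ) i = v).card
      = (univ.filter fun i : Fin (n * d) => proj n d i = v).card := by
    refine Finset.card_bij' (fun a _ => σ a) (fun b _ => σ.symm b) ?_ ?_ ?_ ?_ <;>
      simp [Function.comp]
  rw [h, card_proj_fiber hd v]

/-- positions of the `i`-th block, as a map `Fin k → Fin (n*d)`. -/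
def blockPos (hm : n * d = k * m) {i : ℕ} (hi : i < m) (j : Fin k) : Fin (n * d) :=
  ⟨k * i + (j : ℕ), by
    calc k * i + (j : ℕ) < k * i + k := by omega
      _ = k * (i + 1) := by ring
      _ ≤ k * m := Nat.mul_le_mul_left k hi
      _ = n * d := hm.symm⟩

lemma blockPos_injective (hm : n * d = k * m) {i : ℕ} (hi : i < m) :
    Function.Injective (blockPos hm hi) := by
  intro a b hab
  have := congrArg Fin.val hab
  simp only [blockPos] at this
  exact Fin.ext (by omega)

lemma edgeOf_eq (hm : n * d = k * m) {i : ℕ} (hi : i < m) (y : Fin (n * d) → Fin n) :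
    edgeOf k y i = Multiset.map (fun j => y (blockPos hm hi j)) (univ : Finset (Fin k)).val := by
  unfold edgeOf
  have h1 : (Finset.range k).val = Multiset.map Fin.val (univ : Finset (Fin k)).val := by
    rw [Fin.univ_val_map, List.ofFn_eq_map, List.map_coe_finRange_eq_range]
    rfl
  rw [h1, Multiset.filterMap_map]
  rw [← Multiset.filterMap_eq_map]
  congr 1
  funext j
  have hj : k * i + (j : ℕ) < n * d := (blockPos hm hi j).2
  simp only [Function.comp]
  rw [dif_pos hj]
  rfl

section Transfer
open Equiv

lemma permSet_fiber_card_eq (y y' : Fin (n * d) → Fin n)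
    (hy : y ∈ permSet n d) (hy' : y' ∈ permSet n d) :
    ((univ : Finset (Perm (Fin (n * d)))).filter fun σ : Perm (Fin (n * d)) => proj n d ∘ ⇑σ = y).card
      = ((univ : Finset (Perm (Fin (n * d)))).filter fun σ : Perm (Fin (n * d)) => proj n d ∘ ⇑σ = y').card := by
  simp only [permSet, Finset.mem_filter, Finset.mem_univ, true_and] at hy hy'
  obtain ⟨e, he⟩ := exists_comp_eq y y' (fun c => (hy c).trans (hy' c).symm)
  refine Finset.card_bij' (fun σ _ => e.symm.trans σ) (fun σ _ => e.trans σ) ?_ ?_ ?_ ?_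
  · intro σ hσ
    simp only [Finset.mem_filter, Finset.mem_univ, true_and] at hσ ⊢
    funext a
    have : proj n d (σ (e.symm a)) = y (e.symm a) := congrFun hσ (e.symm a)
    simp only [Function.comp, trans_apply, this]
    rw [← he (e.symm a), apply_symm_apply]
  · intro σ hσ
    simp only [Finset.mem_filter, Finset.mem_univ, true_and] at hσ ⊢
    funext a
    have : proj n d (σ (e a)) = y' (e a) := congrFun hσ (e a)
    simp only [Function.comp, trans_apply, this, he]
  · intro σ _; ext a; simp
  · intro σ _; ext a; simp

lemma sum_transfer (hd : 0 < d) (F : (Fin (n * d) → Fin n) → ℝ) :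
    (∑ y ∈ permSet n d, F y) / ((permSet n d).card : ℝ)
      = (∑ σ : Perm (Fin (n * d)), F (proj n d ∘ ⇑σ))
          / (Fintype.card (Perm (Fin (n * d))) : ℝ) := by
  set c := ((univ : Finset (Perm (Fin (n * d)))).filter
      fun σ : Perm (Fin (n * d)) => proj n d ∘ ⇑σ = proj n d).card with hc
  have hfib : ∀ y ∈ permSet n d,
      ((univ : Finset (Perm (Fin (n * d)))).filter fun σ : Perm (Fin (n * d)) => proj n d ∘ ⇑σ = y).card = c :=
    fun y hy => permSet_fiber_card_eq y (proj n d) hy (proj_mem_permSet hd)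
  have hsum : ∑ σ : Perm (Fin (n * d)), F (proj n d ∘ ⇑σ)
      = (c : ℝ) * ∑ y ∈ permSet n d, F y :=
    sum_comp_of_fiber_const _ _ _ c (fun σ _ => comp_perm_mem_permSet hd σ) hfib F
  have hcard : Fintype.card (Perm (Fin (n * d))) = (permSet n d).card * c := by
    rw [← Finset.card_univ]
    exact card_eq_mul_of_fiber_const _ _ _ c (fun σ _ => comp_perm_mem_permSet hd σ) hfib
  have hc0 : 0 < c := by
    refine Finset.card_pos.mpr ⟨Equiv.refl _, ?_⟩
    simp only [Finset.mem_filter, Finset.mem_univ, true_and]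
    rfl
  have hΩ0 : 0 < (permSet n d).card := Finset.card_pos.mpr ⟨proj n d, proj_mem_permSet hd⟩
  rw [hsum, hcard]
  push_cast
  rw [mul_comm ((permSet n d).card : ℝ) (c : ℝ), mul_div_mul_left]
  exact Nat.cast_ne_zero.mpr hc0.ne'

lemma exists_perm_comp (x x' : Fin k → Fin (n * d))
    (hx : Function.Injective x) (hx' : Function.Injective x') :
    ∃ ρ : Perm (Fin (n * d)), ∀ j, ρ (x j) = x' j := by
  classical
  let f : Fin (n * d) → Option (Fin k) := fun a => if h : ∃ j, x j = a then some h.choose else none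
  let g : Fin (n * d) → Option (Fin k) := fun a => if h : ∃ j, x' j = a then some h.choose else none
  have keyf : ∀ (z : Fin k → Fin (n * d)) (hz : Function.Injective z) (j : Fin k),
      (univ.filter fun a => (fun a => if h : ∃ j, z j = a then some h.choose else none) a
        = some j) = {z j} := by
    intro z hz j
    ext a
    simp only [Finset.mem_filter, Finset.mem_univ, true_and, Finset.mem_singleton]
    constructor
    · intro ha
      by_cases h : ∃ j', z j' = a
      · rw [dif_pos h] at ha
        have h1 : z h.choose = a := h.choose_spec
        have h2 : h.choose = j := by simpa using ha
        rw [← h1, h2]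
      · rw [dif_neg h] at ha; exact absurd ha (by simp)
    · rintro rfl
      have h : ∃ j', z j' = z j := ⟨j, rfl⟩
      rw [dif_pos h]
      have := h.choose_spec
      exact congrArg some (hz this)
  have keyn : ∀ (z : Fin k → Fin (n * d)) (hz : Function.Injective z),
      (univ.filter fun a => (fun a => if h : ∃ j, z j = a then some h.choose else none) a
        = none).card = n * d - k := by
    intro z hz
    have : (univ.filter fun a => (fun a => if h : ∃ j, z j = a then some h.choose else none) a
        = none) = (Finset.image z univ)ᶜ := by
      ext a
      constructor
      · intro ha
        rw [Finset.mem_compl]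
        intro hmem
        obtain ⟨j', -, hj'⟩ := Finset.mem_image.mp hmem
        have h2 := (Finset.mem_filter.mp ha).2
        beta_reduce at h2
        rw [dif_pos ⟨j', hj'⟩] at h2
        exact absurd h2 (by simp)
      · intro ha
        refine Finset.mem_filter.mpr ⟨Finset.mem_univ _, ?_⟩
        beta_reduce
        rw [dif_neg]
        rintro ⟨j', hj'⟩
        exact (Finset.mem_compl.mp ha) (Finset.mem_image.mpr ⟨j', Finset.mem_univ _, hj'⟩)
    rw [this, Finset.card_compl, Finset.card_image_of_injective _ hz]
    simp
  obtain ⟨e, he⟩ := exists_comp_eq f g (by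
    intro cc
    match cc with
    | some j => rw [keyf x hx j, keyf x' hx' j]; simp
    | none => rw [keyn x hx, keyn x' hx'])
  refine ⟨e, fun j => ?_⟩
  have hf : f (x j) = some j := by
    have h : ∃ j', x j' = x j := ⟨j, rfl⟩
    simp only [f, dif_pos h]
    exact congrArg some (hx h.choose_spec)
  have hg : g (e (x j)) = some j := by rw [he, hf]
  by_cases h : ∃ j', x' j' = e (x j)
  · simp only [g, dif_pos h] at hg
    have h1 : x' h.choose = e (x j) := h.choose_spec
    have h2 : h.choose = j := by simpa using hg
    rw [← h1, h2]
  · simp only [g, dif_neg h] at hg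
    exact absurd hg (by simp)

end Transfer

section Tuples
open Equiv

/-- values of `σ` on the positions of block `i`. -/
def tupleOf (hm : n * d = k * m) {i : ℕ} (hi : i < m) (σ : Perm (Fin (n * d)))
    (j : Fin k) : Fin (n * d) := σ (blockPos hm hi j)

lemma tupleOf_injective (hm : n * d = k * m) {i : ℕ} (hi : i < m) (σ : Perm (Fin (n * d))) :
    Function.Injective (tupleOf hm hi σ) :=
  fun a b hab => blockPos_injective hm hi (σ.injective hab)

def injSet (n d k : ℕ) : Finset (Fin k → Fin (n * d)) :=
  univ.filter Function.Injective

lemma card_injSet : (injSet n d k).card = (n * d).descFactorial k := by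
  rw [injSet, ← Fintype.card_subtype]
  rw [Fintype.card_congr (Equiv.subtypeInjectiveEquivEmbedding (Fin k) (Fin (n * d)))]
  rw [Fintype.card_embedding_eq]
  simp

lemma tuple_fiber_card_eq (hm : n * d = k * m) {i : ℕ} (hi : i < m) (x x' : Fin k → Fin (n * d))
    (hx : x ∈ injSet n d k) (hx' : x' ∈ injSet n d k) :
    ((univ : Finset (Perm (Fin (n * d)))).filter
        fun σ : Perm (Fin (n * d)) => tupleOf hm hi σ = x).card
      = ((univ : Finset (Perm (Fin (n * d)))).filter
        fun σ : Perm (Fin (n * d)) => tupleOf hm hi σ = x').card := by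
  simp only [injSet, Finset.mem_filter, Finset.mem_univ, true_and] at hx hx'
  obtain ⟨ρ, hρ⟩ := exists_perm_comp x x' hx hx'
  refine Finset.card_bij' (fun σ _ => σ.trans ρ) (fun σ _ => σ.trans ρ.symm) ?_ ?_ ?_ ?_
  · intro σ hσ
    simp only [Finset.mem_filter, Finset.mem_univ, true_and] at hσ ⊢
    funext j
    have : σ (blockPos hm hi j) = x j := congrFun hσ j
    simp only [tupleOf, trans_apply, this, hρ]
  · intro σ hσ
    simp only [Finset.mem_filter, Finset.mem_univ, true_and] at hσ ⊢
    funext j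
    have : σ (blockPos hm hi j) = x' j := congrFun hσ j
    simp only [tupleOf, trans_apply, this, ← hρ j, symm_apply_apply]
  · intro σ _; ext a; simp
  · intro σ _; ext a; simp

/-- the canonical injective tuple. -/
def x₀ (hkn : k ≤ n) (hd : 0 < d) : Fin k → Fin (n * d) := fun j =>
  ⟨(j : ℕ), lt_of_lt_of_le j.2 (le_trans hkn (Nat.le_mul_of_pos_right n hd))⟩

lemma x₀_mem (hkn : k ≤ n) (hd : 0 < d) : x₀ hkn hd ∈ injSet n d k := by
  simp only [injSet, Finset.mem_filter, Finset.mem_univ, true_and]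
  intro a b hab
  simpa [x₀, Fin.ext_iff] using hab

/-- the edge of a value-tuple, projected to `Fin n`. -/
def edgeT (n d k : ℕ) (x : Fin k → Fin (n * d)) : Multiset (Fin n) :=
  Multiset.map (fun j => proj n d (x j)) (univ : Finset (Fin k)).val

lemma edgeOf_comp (hm : n * d = k * m) (hd : 0 < d) {i : ℕ} (hi : i < m) (σ : Perm (Fin (n * d))) :
    edgeOf k (proj n d ∘ ⇑σ) i = edgeT n d k (tupleOf hm hi σ) := by
  rw [edgeOf_eq hm hi]
  rfl

/-- Main block count: the number of permutations whose `i`-th block is a simple loop,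
times `(nd)_k`, equals `(nd)! * A` where `A` counts injective simple-loop tuples. -/
lemma count_event (hm : n * d = k * m) (hd : 0 < d) (hkn : k ≤ n) {i : ℕ} (hi : i < m) :
    ((univ : Finset (Perm (Fin (n * d)))).filter
        fun σ : Perm (Fin (n * d)) => isSimpleLoop (edgeOf k (proj n d ∘ ⇑σ) i)).card
      * (n * d).descFactorial k
    = Fintype.card (Perm (Fin (n * d)))
        * ((injSet n d k).filter fun x => isSimpleLoop (edgeT n d k x)).card := by
  set c := ((univ : Finset (Perm (Fin (n * d)))).filter
      fun σ : Perm (Fin (n * d)) => tupleOf hm hi σ = x₀ hkn hd).card with hc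
  have hconst : ∀ x ∈ injSet n d k,
      ((univ : Finset (Perm (Fin (n * d)))).filter
        fun σ : Perm (Fin (n * d)) => tupleOf hm hi σ = x).card = c :=
    fun x hx => tuple_fiber_card_eq hm hi x _ hx (x₀_mem hkn hd)
  have hmaps : ∀ σ : Perm (Fin (n * d)), σ ∈ (univ : Finset (Perm (Fin (n * d)))) →
      tupleOf hm hi σ ∈ injSet n d k := by
    intro σ _
    simp only [injSet, Finset.mem_filter, Finset.mem_univ, true_and]
    exact tupleOf_injective hm hi σ
  have h1 : Fintype.card (Perm (Fin (n * d))) = (injSet n d k).card * c := by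
    rw [← Finset.card_univ]
    exact card_eq_mul_of_fiber_const _ _ _ c hmaps hconst
  have h2 : ((univ : Finset (Perm (Fin (n * d)))).filter
        fun σ : Perm (Fin (n * d)) => isSimpleLoop (edgeOf k (proj n d ∘ ⇑σ) i)).card
      = ((injSet n d k).filter fun x => isSimpleLoop (edgeT n d k x)).card * c := by
    refine card_eq_mul_of_fiber_const _ _ (fun σ => tupleOf hm hi σ) c ?_ ?_
    · intro σ hσ
      simp only [Finset.mem_filter, Finset.mem_univ, true_and] at hσ
      rw [edgeOf_comp hm hd hi σ] at hσ
      exact Finset.mem_filter.mpr ⟨hmaps σ (Finset.mem_univ σ), hσ⟩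
    · intro x hx
      obtain ⟨hx1, hx2⟩ := Finset.mem_filter.mp hx
      rw [← hconst x hx1]
      congr 1
      ext σ
      simp only [Finset.mem_filter, Finset.mem_univ, true_and]
      constructor
      · rintro ⟨-, h⟩; exact h
      · intro h
        refine ⟨?_, h⟩
        rw [edgeOf_comp hm hd hi σ, h]
        exact hx2
  rw [h2, h1]
  rw [card_injSet]
  ring

end Tuples

section Counting

lemma div_helper (hd : 0 < d) (a b : ℕ) (hb : b < d) : (a * d + b) / d = a := by
  rw [Nat.mul_comm, Nat.mul_add_div hd, Nat.div_eq_of_lt hb, Nat.add_zero]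

lemma mod_helper (hd : 0 < d) (a b : ℕ) (hb : b < d) : (a * d + b) % d = b := by
  rw [Nat.mul_comm, Nat.mul_add_mod]; exact Nat.mod_eq_of_lt hb

/-- number of indices mapping to `v`. -/
def fib (w : Fin k → Fin n) (v : Fin n) : ℕ := (univ.filter fun j => w j = v).card

lemma count_map_univ (w : Fin k → Fin n) (v : Fin n) :
    Multiset.count v (Multiset.map w (univ : Finset (Fin k)).val) = fib w v := by
  rw [Multiset.count_map]
  have h : Multiset.filter (fun a => v = w a) (univ : Finset (Fin k)).val
      = Multiset.filter (fun a => w a = v) (univ : Finset (Fin k)).val :=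
    Multiset.filter_congr (fun a _ => eq_comm)
  rw [h]
  rfl

lemma isSL_iff (w : Fin k → Fin n) :
    isSimpleLoop (Multiset.map w (univ : Finset (Fin k)).val) ↔
      ((univ.filter fun v => fib w v = 2).card = 1 ∧ ∀ v, fib w v ≤ 2) := by
  unfold isSimpleLoop
  simp only [count_map_univ]

lemma two_le_fib {w : Fin k → Fin n} {j j' : Fin k} (hne : j ≠ j') (heq : w j = w j') :
    2 ≤ fib w (w j) := by
  have hsub : ({j, j'} : Finset (Fin k)) ⊆ univ.filter (fun a => w a = w j) := by
    intro a ha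
    rcases Finset.mem_insert.mp ha with rfl | ha
    · exact Finset.mem_filter.mpr ⟨Finset.mem_univ _, rfl⟩
    · rw [Finset.mem_singleton.mp ha]
      exact Finset.mem_filter.mpr ⟨Finset.mem_univ _, heq.symm⟩
  calc 2 = ({j, j'} : Finset (Fin k)).card := (Finset.card_pair hne).symm
    _ ≤ _ := Finset.card_le_card hsub

lemma exists_v2 {w : Fin k → Fin n} (hw : (univ.filter fun v => fib w v = 2).card = 1) :
    ∃ v₂, ∀ v, fib w v = 2 ↔ v = v₂ := by
  obtain ⟨v₂, hv₂⟩ := Finset.card_eq_one.mp hw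
  refine ⟨v₂, fun v => ?_⟩
  constructor
  · intro h
    have hmem : v ∈ univ.filter fun v => fib w v = 2 :=
      Finset.mem_filter.mpr ⟨Finset.mem_univ _, h⟩
    rw [hv₂] at hmem
    exact Finset.mem_singleton.mp hmem
  · intro h
    rw [h]
    have hmem : v₂ ∈ ({v₂} : Finset (Fin n)) := Finset.mem_singleton_self v₂
    rw [← hv₂] at hmem
    exact (Finset.mem_filter.mp hmem).2

/-- indices involved in a collision. -/
def DSet (w : Fin k → Fin n) : Finset (Fin k) := univ.filter fun j => 2 ≤ fib w (w j)

lemma DSet_eq {w : Fin k → Fin n} (hw2 : ∀ v, fib w v ≤ 2) {v₂ : Fin n}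
    (hv₂ : ∀ v, fib w v = 2 ↔ v = v₂) :
    DSet w = univ.filter fun j => w j = v₂ := by
  ext j
  simp only [DSet, Finset.mem_filter, Finset.mem_univ, true_and]
  constructor
  · intro h
    exact (hv₂ (w j)).mp (le_antisymm (hw2 (w j)) h)
  · intro h
    rw [h]
    exact ((hv₂ v₂).mpr rfl).ge

/-- The set of "almost injective" vertex patterns. -/
def WSet (n k : ℕ) : Finset (Fin k → Fin n) :=
  univ.filter fun w => isSimpleLoop (Multiset.map w (univ : Finset (Fin k)).val)

lemma card_subtype_ne (q : Fin k) : Fintype.card {j : Fin k // j ≠ q} = k - 1 := by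
  rw [Fintype.card_subtype]
  rw [Finset.filter_ne']
  rw [Finset.card_erase_of_mem (Finset.mem_univ q)]
  simp

/-- Number of functions with prescribed equal pair. -/
lemma card_eq_pair {p q : Fin k} (hpq : p ≠ q) :
    ((univ : Finset (Fin k → Fin d)).filter fun o => o p = o q).card = d ^ (k - 1) := by
  rw [← Fintype.card_subtype]
  have e : {o : Fin k → Fin d // o p = o q} ≃ ({j : Fin k // j ≠ q} → Fin d) :=
    { toFun := fun o j => o.1 j.1
      invFun := fun g => ⟨fun j => if h : j = q then g ⟨p, hpq⟩ else g ⟨j, h⟩, by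
        show (if h : p = q then g ⟨p, hpq⟩ else g ⟨p, h⟩)
          = (if h : q = q then g ⟨p, hpq⟩ else g ⟨q, h⟩)
        rw [dif_neg hpq, dif_pos rfl]⟩
      left_inv := by
        intro o
        apply Subtype.ext
        funext j
        show (if h : j = q then o.1 p else o.1 j) = o.1 j
        by_cases h : j = q
        · subst h
          rw [dif_pos rfl, o.2]
        · rw [dif_neg h]
      right_inv := by
        intro g
        funext j
        show (if h : (j : Fin k) = q then g ⟨p, hpq⟩ else g ⟨(j : Fin k), h⟩) = g j
        rw [dif_neg j.2] }
  rw [Fintype.card_congr e, Fintype.card_fun, card_subtype_ne, Fintype.card_fin]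

lemma card_ne_pair (hd : 0 < d) {p q : Fin k} (hpq : p ≠ q) :
    ((univ : Finset (Fin k → Fin d)).filter fun o => o p ≠ o q).card
      = d ^ k - d ^ (k - 1) := by
  simp only [ne_eq]
  have h := Finset.card_filter_add_card_filter_not
    (α := Fin k → Fin d) (s := univ) (fun o => o p = o q)
  rw [card_eq_pair hpq] at h
  have huniv : (univ : Finset (Fin k → Fin d)).card = d ^ k := by
    rw [Finset.card_univ, Fintype.card_fun, Fintype.card_fin, Fintype.card_fin]
  rw [huniv] at h
  exact Nat.eq_sub_of_add_eq' h

/-- counting almost-injective patterns with prescribed collision set. -/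
lemma card_WSet_fiber {P : Finset (Fin k)} (hP : P ∈ Finset.powersetCard 2 (univ : Finset (Fin k))) :
    ((WSet n k).filter fun w => DSet w = P).card = n.descFactorial (k - 1) := by
  obtain ⟨-, hP2⟩ := Finset.mem_powersetCard.mp hP
  obtain ⟨p, q, hpq, rfl⟩ := Finset.card_eq_two.mp hP2
  have hcard : ((univ : Finset ({j : Fin k // j ≠ q} → Fin n)).filter
      fun u => Function.Injective u).card = n.descFactorial (k - 1) := by
    rw [← Fintype.card_subtype,
      Fintype.card_congr (Equiv.subtypeInjectiveEquivEmbedding _ _),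
      Fintype.card_embedding_eq, card_subtype_ne, Fintype.card_fin]
  rw [← hcard]
  -- facts about elements of the fiber
  have hfact : ∀ w ∈ (WSet n k).filter fun w => DSet w = ({p, q} : Finset (Fin k)),
      w p = w q ∧ (∀ j, j ≠ p → j ≠ q → ∀ j', j' ≠ j → w j' ≠ w j) := by
    intro w hw
    obtain ⟨hwW, hwD⟩ := Finset.mem_filter.mp hw
    obtain ⟨hw1, hw2⟩ := (isSL_iff w).mp (Finset.mem_filter.mp hwW).2
    obtain ⟨v₂, hv₂⟩ := exists_v2 hw1
    have hDeq := DSet_eq hw2 hv₂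
    have hmemD : ∀ j, j ∈ ({p, q} : Finset (Fin k)) ↔ w j = v₂ := by
      intro j
      rw [← hwD, hDeq]
      simp
    constructor
    · have hp : w p = v₂ := (hmemD p).mp (by simp)
      have hq : w q = v₂ := (hmemD q).mp (by simp)
      rw [hp, hq]
    · intro j hjp hjq j' hne heq
      have h2 : 2 ≤ fib w (w j) := by
        have := two_le_fib hne heq
        rwa [heq] at this
      have : j ∈ ({p, q} : Finset (Fin k)) := by
        rw [hmemD]
        exact (hv₂ (w j)).mp (le_antisymm (hw2 _) h2)
      simp only [Finset.mem_insert, Finset.mem_singleton] at this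
      tauto
  refine Finset.card_bij' (fun w _ => fun j => w j.1)
    (fun u _ => fun j => if h : j = q then u ⟨p, hpq⟩ else u ⟨j, h⟩) ?_ ?_ ?_ ?_
  · -- forward membership: restriction is injective
    intro w hw
    simp only [Finset.mem_filter, Finset.mem_univ, true_and]
    intro j₁ j₂ heq
    by_contra hne
    obtain ⟨hwpq, hkey⟩ := hfact w hw
    have hne' : j₁.1 ≠ j₂.1 := fun h => hne (Subtype.ext h)
    -- both j₁.1 and j₂.1 must be in {p,q}, but both are ≠ q, so both = p
    obtain ⟨hwW, hwD⟩ := Finset.mem_filter.mp hw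
    obtain ⟨hw1, hw2⟩ := (isSL_iff w).mp (Finset.mem_filter.mp hwW).2
    obtain ⟨v₂, hv₂⟩ := exists_v2 hw1
    have hDeq := DSet_eq hw2 hv₂
    have hmem1 : j₁.1 ∈ DSet w := by
      simp only [DSet, Finset.mem_filter, Finset.mem_univ, true_and]
      exact two_le_fib hne' heq
    have hmem2 : j₂.1 ∈ DSet w := by
      simp only [DSet, Finset.mem_filter, Finset.mem_univ, true_and]
      exact two_le_fib (Ne.symm hne') heq.symm
    rw [hwD] at hmem1 hmem2
    simp only [Finset.mem_insert, Finset.mem_singleton] at hmem1 hmem2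
    have h1 : j₁.1 = p := by rcases hmem1 with h | h; exact h; exact absurd h j₁.2
    have h2 : j₂.1 = p := by rcases hmem2 with h | h; exact h; exact absurd h j₂.2
    exact hne' (h1.trans h2.symm)
  · -- backward membership
    intro u hu
    simp only [Finset.mem_filter, Finset.mem_univ, true_and] at hu
    set w : Fin k → Fin n := fun j => if h : j = q then u ⟨p, hpq⟩ else u ⟨j, h⟩ with hwdef
    set a := u ⟨p, hpq⟩ with ha
    have hwq : w q = a := by simp only [hwdef, dif_pos rfl]
    have hwp : w p = a := by simp only [hwdef, dif_neg hpq]; exact ha.symm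
    have hfib_a : (univ.filter fun j => w j = a) = ({p, q} : Finset (Fin k)) := by
      ext j
      simp only [Finset.mem_filter, Finset.mem_univ, true_and, Finset.mem_insert,
        Finset.mem_singleton]
      constructor
      · intro h
        by_cases hjq : j = q
        · right; exact hjq
        · left
          simp only [hwdef, dif_neg hjq] at h
          have := hu h
          exact congrArg Subtype.val this
      · rintro (rfl | rfl)
        · exact hwp
        · exact hwq
    have hfib_a_card : fib w a = 2 := by
      rw [fib, hfib_a, Finset.card_pair hpq]
    have hfib_other : ∀ v, v ≠ a → fib w v ≤ 1 := by
      intro v hv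
      rw [fib]
      refine Finset.card_le_one.mpr ?_
      intro j₁ h₁ j₂ h₂
      obtain ⟨-, h₁⟩ := Finset.mem_filter.mp h₁
      obtain ⟨-, h₂⟩ := Finset.mem_filter.mp h₂
      have hj₁q : j₁ ≠ q := fun h => hv (by rw [← h₁, h, hwq])
      have hj₂q : j₂ ≠ q := fun h => hv (by rw [← h₂, h, hwq])
      simp only [hwdef, dif_neg hj₁q] at h₁
      simp only [hwdef, dif_neg hj₂q] at h₂
      have := hu (h₁.trans h₂.symm)
      exact congrArg Subtype.val this
    have hSL : (univ.filter fun v => fib w v = 2).card = 1 ∧ ∀ v, fib w v ≤ 2 := by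
      constructor
      · rw [Finset.card_eq_one]
        refine ⟨a, ?_⟩
        ext v
        simp only [Finset.mem_filter, Finset.mem_univ, true_and, Finset.mem_singleton]
        constructor
        · intro h
          by_contra hv
          have := hfib_other v hv
          omega
        · rintro rfl; exact hfib_a_card
      · intro v
        by_cases hv : v = a
        · rw [hv, hfib_a_card]
        · exact (hfib_other v hv).trans (by omega)
    refine Finset.mem_filter.mpr ⟨?_, ?_⟩
    · refine Finset.mem_filter.mpr ⟨Finset.mem_univ _, ?_⟩
      exact (isSL_iff w).mpr hSL
    · -- DSet w = {p, q}
      obtain ⟨v₂, hv₂⟩ := exists_v2 hSL.1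
      have hav : a = v₂ := (hv₂ a).mp hfib_a_card
      rw [DSet_eq hSL.2 hv₂, ← hav, hfib_a]
  · -- left inverse
    intro w hw
    obtain ⟨hwpq, -⟩ := hfact w hw
    funext j
    show (if h : j = q then w p else w j) = w j
    by_cases h : j = q
    · subst h
      rw [dif_pos rfl]
      exact hwpq
    · rw [dif_neg h]
  · -- right inverse
    intro u hu
    funext j
    show (if h : (j : Fin k) = q then u ⟨p, hpq⟩ else u ⟨(j : Fin k), h⟩) = u j
    rw [dif_neg j.2]

lemma card_WSet : (WSet n k).card = k.choose 2 * n.descFactorial (k - 1) := by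
  have h := card_eq_mul_of_fiber_const (WSet n k)
    (Finset.powersetCard 2 (univ : Finset (Fin k))) DSet (n.descFactorial (k - 1)) ?_ ?_
  · rw [h, Finset.card_powersetCard, Finset.card_univ, Fintype.card_fin]
  · intro w hw
    obtain ⟨-, hwSL⟩ := Finset.mem_filter.mp hw
    obtain ⟨hw1, hw2⟩ := (isSL_iff w).mp hwSL
    obtain ⟨v₂, hv₂⟩ := exists_v2 hw1
    rw [Finset.mem_powersetCard]
    refine ⟨Finset.filter_subset _ _ |>.trans (Finset.subset_univ _), ?_⟩
    rw [DSet_eq hw2 hv₂]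
    exact (hv₂ v₂).mpr rfl
  · intro P hP
    exact card_WSet_fiber hP

end Counting

section ACount

lemma val_div_eq {x : Fin k → Fin (n * d)} {w : Fin k → Fin n}
    (h : proj n d ∘ x = w) (j : Fin k) : ((x j : ℕ)) / d = (w j : ℕ) :=
  congrArg Fin.val (congrFun h j)

lemma card_A_fiber (hd : 0 < d) {w : Fin k → Fin n} (hw : w ∈ WSet n k) :
    (((injSet n d k).filter fun x => isSimpleLoop (edgeT n d k x)).filter
        fun x => proj n d ∘ x = w).card = d ^ k - d ^ (k - 1) := by
  obtain ⟨-, hwSL⟩ := Finset.mem_filter.mp hw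
  obtain ⟨hw1, hw2⟩ := (isSL_iff w).mp hwSL
  obtain ⟨v₂, hv₂⟩ := exists_v2 hw1
  have hfibv₂ : (univ.filter fun j => w j = v₂).card = 2 := (hv₂ v₂).mpr rfl
  obtain ⟨p, q, hpq, hPeq⟩ := Finset.card_eq_two.mp hfibv₂
  have hwp : w p = v₂ := by
    have : p ∈ univ.filter fun j => w j = v₂ := by rw [hPeq]; simp
    exact (Finset.mem_filter.mp this).2
  have hwq : w q = v₂ := by
    have : q ∈ univ.filter fun j => w j = v₂ := by rw [hPeq]; simp
    exact (Finset.mem_filter.mp this).2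
  have hcollide : ∀ j j' : Fin k, j ≠ j' → w j = w j' →
      j ∈ ({p, q} : Finset (Fin k)) ∧ j' ∈ ({p, q} : Finset (Fin k)) := by
    intro j j' hne heq
    have h2 : fib w (w j) = 2 := le_antisymm (hw2 _) (two_le_fib hne heq)
    have hj : w j = v₂ := (hv₂ (w j)).mp h2
    have hj' : w j' = v₂ := by rw [← heq]; exact hj
    constructor
    · rw [← hPeq]; exact Finset.mem_filter.mpr ⟨Finset.mem_univ _, hj⟩
    · rw [← hPeq]; exact Finset.mem_filter.mpr ⟨Finset.mem_univ _, hj'⟩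
  rw [← card_ne_pair hd hpq]
  refine Finset.card_bij' (fun x _ => fun j => (⟨(x j : ℕ) % d, Nat.mod_lt _ hd⟩ : Fin d))
    (fun o _ => fun j => (⟨(w j : ℕ) * d + (o j : ℕ), ?_⟩ : Fin (n * d))) ?_ ?_ ?_ ?_
  · -- bound
    calc (w j : ℕ) * d + (o j : ℕ) < (w j : ℕ) * d + d := by
          have := (o j).2; omega
      _ = ((w j : ℕ) + 1) * d := by ring
      _ ≤ n * d := Nat.mul_le_mul_right d (w j).2
  · -- forward membership
    intro x hx
    obtain ⟨hxA, hxw⟩ := Finset.mem_filter.mp hx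
    obtain ⟨hxI, -⟩ := Finset.mem_filter.mp hxA
    have hxinj : Function.Injective x := (Finset.mem_filter.mp hxI).2
    simp only [Finset.mem_filter, Finset.mem_univ, true_and]
    intro hcontra
    have hmod : (x p : ℕ) % d = (x q : ℕ) % d := congrArg Fin.val hcontra
    have hdiv : (x p : ℕ) / d = (x q : ℕ) / d := by
      rw [val_div_eq hxw p, val_div_eq hxw q, hwp, hwq]
    have : x p = x q := by
      apply Fin.ext
      have h1 := Nat.div_add_mod (x p : ℕ) d
      have h2 := Nat.div_add_mod (x q : ℕ) d
      rw [hdiv, hmod] at h1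
      exact h1.symm.trans h2
    exact hpq (hxinj this)
  · -- backward membership
    intro o ho
    simp only [Finset.mem_filter, Finset.mem_univ, true_and] at ho
    have hproj : proj n d ∘ (fun j => (⟨(w j : ℕ) * d + (o j : ℕ), by
        calc (w j : ℕ) * d + (o j : ℕ) < (w j : ℕ) * d + d := by
              have := (o j).2; omega
          _ = ((w j : ℕ) + 1) * d := by ring
          _ ≤ n * d := Nat.mul_le_mul_right d (w j).2⟩ : Fin (n * d))) = w := by
      funext j
      apply Fin.ext
      exact div_helper hd _ _ (o j).2
    refine Finset.mem_filter.mpr ⟨Finset.mem_filter.mpr ⟨?_, ?_⟩, hproj⟩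
    · -- injectivity
      refine Finset.mem_filter.mpr ⟨Finset.mem_univ _, ?_⟩
      intro j j' heq
      by_contra hne
      have hwjj : w j = w j' := by
        have h1 := congrFun hproj j
        have h2 := congrFun hproj j'
        simp only [Function.comp] at h1 h2
        rw [← h1, ← h2]
        exact congrArg (proj n d) heq
      have hvals : (w j : ℕ) * d + (o j : ℕ) = (w j' : ℕ) * d + (o j' : ℕ) :=
        congrArg Fin.val heq
      have hoeq : o j = o j' := by
        apply Fin.ext
        have hww : (w j : ℕ) = (w j' : ℕ) := congrArg Fin.val hwjj
        rw [hww] at hvals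
        exact Nat.add_left_cancel hvals
      obtain ⟨hj, hj'⟩ := hcollide j j' hne hwjj
      simp only [Finset.mem_insert, Finset.mem_singleton] at hj hj'
      have : o p = o q := by
        rcases hj with rfl | rfl <;> rcases hj' with rfl | rfl
        · exact absurd rfl hne
        · exact hoeq
        · exact hoeq.symm
        · exact absurd rfl hne
      exact ho this
    · -- simple loop
      have : edgeT n d k (fun j => (⟨(w j : ℕ) * d + (o j : ℕ), by
          calc (w j : ℕ) * d + (o j : ℕ) < (w j : ℕ) * d + d := by
                have := (o j).2; omega
            _ = ((w j : ℕ) + 1) * d := by ring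
            _ ≤ n * d := Nat.mul_le_mul_right d (w j).2⟩ : Fin (n * d)))
          = Multiset.map w (univ : Finset (Fin k)).val := by
        unfold edgeT
        apply Multiset.map_congr rfl
        intro j _
        exact congrFun hproj j
      rw [this]
      exact hwSL
  · -- left inverse
    intro x hx
    obtain ⟨-, hxw⟩ := Finset.mem_filter.mp hx
    funext j
    apply Fin.ext
    show (w j : ℕ) * d + (x j : ℕ) % d = (x j : ℕ)
    rw [← val_div_eq hxw j, Nat.mul_comm]
    exact Nat.div_add_mod _ _
  · -- right inverse
    intro o ho
    funext j
    apply Fin.ext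
    show ((w j : ℕ) * d + (o j : ℕ)) % d = (o j : ℕ)
    exact mod_helper hd _ _ (o j).2

lemma card_A (hd : 0 < d) :
    ((injSet n d k).filter fun x => isSimpleLoop (edgeT n d k x)).card
      = k.choose 2 * n.descFactorial (k - 1) * (d ^ k - d ^ (k - 1)) := by
  rw [← card_WSet]
  refine card_eq_mul_of_fiber_const _ (WSet n k) (fun x => proj n d ∘ x) _ ?_ ?_
  · intro x hx
    obtain ⟨-, hxSL⟩ := Finset.mem_filter.mp hx
    refine Finset.mem_filter.mpr ⟨Finset.mem_univ _, ?_⟩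
    exact hxSL
  · intro w hw
    exact card_A_fiber hd hw

end ACount

lemma pow_sub_cast (hd : 1 ≤ d) (hk : 2 ≤ k) :
    ((d ^ k - d ^ (k - 1) : ℕ) : ℝ) = (d.descFactorial 2 : ℝ) * (d : ℝ) ^ (k - 2) := by
  have hle : d ^ (k - 1) ≤ d ^ k := Nat.pow_le_pow_right hd (by omega)
  rw [Nat.cast_sub hle, Nat.cast_pow, Nat.cast_pow, Nat.cast_descFactorial_two]
  have e1 : (d : ℝ) ^ k = (d : ℝ) ^ (k - 2) * d * d := by
    rw [← pow_succ, ← pow_succ]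
    congr 1
    omega
  have e2 : (d : ℝ) ^ (k - 1) = (d : ℝ) ^ (k - 2) * d := by
    rw [← pow_succ]
    congr 1
    omega
  rw [e1, e2]
  ring

lemma part_a (hk : 3 ≤ k) (hd : 1 ≤ d) (n m : ℕ) (hkn : k ≤ n) (hm : n * d = k * m) :
    (∑ y ∈ permSet n d, (numSimpleLoops k y : ℝ)) / ((permSet n d).card : ℝ)
      = (m : ℝ) * (k.choose 2 : ℝ) * (n.descFactorial (k - 1) : ℝ)
          * (d.descFactorial 2 : ℝ) * (d : ℝ) ^ (k - 2)
          / ((n * d).descFactorial k : ℝ) := by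
  have hd0 : 0 < d := hd
  have hk0 : 0 < k := by omega
  have hN : k ≤ n * d := le_trans hkn (Nat.le_mul_of_pos_right n hd0)
  have hmk : n * d / k = m := by rw [hm]; exact Nat.mul_div_cancel_left m hk0
  have hNkne : (((n * d).descFactorial k : ℕ) : ℝ) ≠ 0 := by
    rw [Nat.cast_ne_zero, Ne, Nat.descFactorial_eq_zero_iff_lt]
    omega
  have hfacne : (((n * d).factorial : ℕ) : ℝ) ≠ 0 :=
    Nat.cast_ne_zero.mpr (Nat.factorial_ne_zero _)
  rw [sum_transfer hd0 (fun y => (numSimpleLoops k y : ℝ))]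
  have hexp : ∀ σ : Equiv.Perm (Fin (n * d)),
      (numSimpleLoops k (proj n d ∘ ⇑σ) : ℝ)
        = ∑ i ∈ Finset.range m,
            (if isSimpleLoop (edgeOf k (proj n d ∘ ⇑σ) i) then (1 : ℝ) else 0) := by
    intro σ
    rw [numSimpleLoops, hmk, Finset.card_filter]
    push_cast
    rfl
  rw [Finset.sum_congr rfl (fun σ _ => hexp σ), Finset.sum_comm]
  set A := ((injSet n d k).filter fun x => isSimpleLoop (edgeT n d k x)).card with hA
  have hinner : ∀ i ∈ Finset.range m,
      (∑ σ : Equiv.Perm (Fin (n * d)),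
        (if isSimpleLoop (edgeOf k (proj n d ∘ ⇑σ) i) then (1 : ℝ) else 0))
      = ((n * d).factorial : ℝ) * (A : ℝ) / ((n * d).descFactorial k : ℝ) := by
    intro i hi
    have hi' : i < m := Finset.mem_range.mp hi
    rw [Finset.sum_boole]
    have hce := count_event hm hd0 hkn hi'
    rw [Fintype.card_perm, Fintype.card_fin] at hce
    have : (((univ : Finset (Equiv.Perm (Fin (n * d)))).filter
        fun σ : Equiv.Perm (Fin (n * d)) =>
          isSimpleLoop (edgeOf k (proj n d ∘ ⇑σ) i)).card : ℝ)
        * ((n * d).descFactorial k : ℝ) = ((n * d).factorial : ℝ) * (A : ℝ) := by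
      exact_mod_cast congrArg Nat.cast hce
    field_simp at this ⊢
    convert this using 2
  rw [Finset.sum_congr rfl hinner, Finset.sum_const, Finset.card_range, nsmul_eq_mul]
  rw [Fintype.card_perm, Fintype.card_fin]
  have hAval : (A : ℝ) = (k.choose 2 : ℝ) * (n.descFactorial (k - 1) : ℝ)
      * ((d.descFactorial 2 : ℝ) * (d : ℝ) ^ (k - 2)) := by
    rw [hA, card_A hd0]
    push_cast
    rw [← pow_sub_cast hd (by omega)]
  rw [hAval]
  simp only [Nat.cast_descFactorial_two]
  field_simp

end Stmt6Aux

open Filter Finset in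
lemma tendsto_factor (d : ℕ) (hd : 1 ≤ d) (c : ℝ) :
    Tendsto (fun n : ℕ => ((n : ℝ) - c) / ((n : ℝ) * (d : ℝ) - (c + 1)))
      atTop (nhds (1 / (d : ℝ))) := by
  have hdne : (d : ℝ) ≠ 0 := by positivity
  have h0 : Tendsto (fun n : ℕ => (1 : ℝ) / n) atTop (nhds 0) :=
    tendsto_one_div_atTop_nhds_zero_nat
  have hnum : Tendsto (fun n : ℕ => (1 : ℝ) - c / n) atTop (nhds 1) := by
    have := tendsto_const_nhds (x := (1 : ℝ)) (f := atTop (α := ℕ)) |>.sub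
      ((h0.const_mul c).congr (fun n => by rw [mul_one_div]))
    simpa using this
  have hden : Tendsto (fun n : ℕ => (d : ℝ) - (c + 1) / n) atTop (nhds (d : ℝ)) := by
    have := tendsto_const_nhds (x := (d : ℝ)) (f := atTop (α := ℕ)) |>.sub
      ((h0.const_mul (c + 1)).congr (fun n => by rw [mul_one_div]))
    simpa using this
  have h3 := hnum.div hden hdne
  apply h3.congr'
  filter_upwards [eventually_ge_atTop 1] with n hn
  have hn0 : (n : ℝ) ≠ 0 := by
    have : (0 : ℝ) < n := by exact_mod_cast hn
    exact this.ne'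
  have e1 : (1 : ℝ) - c / n = ((n : ℝ) - c) / n := by field_simp
  have e2 : (d : ℝ) - (c + 1) / n = ((n : ℝ) * d - (c + 1)) / n := by
    field_simp
  simp only [Pi.div_apply]
  rw [e1, e2, div_div_div_cancel_right₀ hn0]

open Filter Finset in
lemma part_b (k d : ℕ) (hk : 3 ≤ k) (hd : 1 ≤ d) :
    Tendsto
      (fun n : ℕ => ((n * d : ℝ) / (k : ℝ)) * (k.choose 2 : ℝ)
        * (n.descFactorial (k - 1) : ℝ) * (d.descFactorial 2 : ℝ) * (d : ℝ) ^ (k - 2)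
        / ((n * d).descFactorial k : ℝ))
      atTop (nhds (((k : ℝ) - 1) * ((d : ℝ) - 1) / 2)) := by
  have hdne : (d : ℝ) ≠ 0 := by positivity
  have hkne : (k : ℝ) ≠ 0 := by positivity
  set Cst : ℝ := (k.choose 2 : ℝ) * (d.descFactorial 2 : ℝ) * (d : ℝ) ^ (k - 2) / k with hCst
  have hlim : Tendsto
      (fun n : ℕ => Cst * ∏ i ∈ range (k - 1), (((n : ℝ) - i) / ((n : ℝ) * d - (i + 1))))
      atTop (nhds (Cst * (1 / (d : ℝ)) ^ (k - 1))) := by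
    apply Tendsto.const_mul
    have hconst : ((1 : ℝ) / d) ^ (k - 1) = ∏ _i ∈ range (k - 1), (1 / (d : ℝ)) := by
      rw [Finset.prod_const, Finset.card_range]
    rw [hconst]
    exact tendsto_finset_prod _ (fun i _ => tendsto_factor d hd i)
  have hval : Cst * (1 / (d : ℝ)) ^ (k - 1) = ((k : ℝ) - 1) * ((d : ℝ) - 1) / 2 := by
    rw [hCst, Nat.cast_choose_two, Nat.cast_descFactorial_two]
    have e2 : (d : ℝ) ^ (k - 1) = (d : ℝ) ^ (k - 2) * d := by
      rw [← pow_succ]; congr 1; omega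
    rw [div_pow, one_pow, e2]
    have hdp : (d : ℝ) ^ (k - 2) ≠ 0 := pow_ne_zero _ hdne
    field_simp
  rw [← hval]
  apply hlim.congr'
  filter_upwards [eventually_ge_atTop k] with n hkn
  have hd0 : 0 < d := hd
  have hN : k ≤ n * d := le_trans hkn (Nat.le_mul_of_pos_right n hd0)
  have hP : ((n.descFactorial (k - 1)) : ℝ) = ∏ i ∈ range (k - 1), ((n : ℝ) - i) := by
    rw [Nat.descFactorial_eq_prod_range, Nat.cast_prod]
    refine Finset.prod_congr rfl (fun i hi => ?_)
    have : i < k - 1 := Finset.mem_range.mp hi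
    rw [Nat.cast_sub (by omega)]
  have hQ : (((n * d).descFactorial k) : ℝ) = ∏ i ∈ range k, ((n : ℝ) * d - i) := by
    rw [Nat.descFactorial_eq_prod_range, Nat.cast_prod]
    refine Finset.prod_congr rfl (fun i hi => ?_)
    have : i < k := Finset.mem_range.mp hi
    rw [Nat.cast_sub (by omega)]
    push_cast
    ring
  have hsplit : ∏ i ∈ range k, ((n : ℝ) * d - i)
      = ((n : ℝ) * d) * ∏ i ∈ range (k - 1), ((n : ℝ) * d - ((i : ℝ) + 1)) := by
    have hk1 : k = (k - 1) + 1 := by omega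
    rw [hk1, Finset.prod_range_succ' (fun i => (n : ℝ) * d - (i : ℝ))]
    push_cast
    ring
  have hnd0 : (n : ℝ) * d ≠ 0 := by
    have h1 : (0 : ℝ) < n := by
      have : 0 < n := by omega
      exact_mod_cast this
    positivity
  have hQne : (∏ i ∈ range (k - 1), ((n : ℝ) * d - ((i : ℝ) + 1))) ≠ 0 := by
    refine Finset.prod_ne_zero_iff.mpr (fun i hi => ?_)
    have hik : i < k - 1 := Finset.mem_range.mp hi
    have h1 : (i : ℝ) + 1 < (n : ℝ) * d := by
      have hn1 : i + 1 < n * d := by omega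
      have := (Nat.cast_lt (α := ℝ)).mpr hn1
      push_cast at this
      convert this using 2 <;> push_cast <;> ring
    have := sub_pos.mpr h1
    exact this.ne'
  rw [Finset.prod_div_distrib, ← hP, hQ, hsplit, hCst]
  field_simp
  have hn0 : (n : ℝ) ≠ 0 := left_ne_zero_of_mul hnd0
  field_simp


/-- For fixed `k ≥ 3` and fixed `d ≥ 1`: (a) for every admissible `n` (with `n*d = k*m`),
the expected number of simple loops of a uniformly random permutation `Y` equals
`m * C(k,2) * (n)_{k-1} * (d)_2 * d^{k-2} / (nd)_k`; (b) this quantity (with `m = nd/k`)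
tends to `(k-1)(d-1)/2` as `n → ∞`. -/
theorem stmt6 (k d : ℕ) (hk : 3 ≤ k) (hd : 1 ≤ d) :
    (∀ n m : ℕ, k ≤ n → n * d = k * m →
      (∑ y ∈ permSet n d, (numSimpleLoops k y : ℝ)) / ((permSet n d).card : ℝ)
        = (m : ℝ) * (k.choose 2 : ℝ) * (n.descFactorial (k - 1) : ℝ)
            * (d.descFactorial 2 : ℝ) * (d : ℝ) ^ (k - 2)
            / ((n * d).descFactorial k : ℝ)) ∧
    Filter.Tendsto
      (fun n : ℕ => ((n * d : ℝ) / (k : ℝ)) * (k.choose 2 : ℝ)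
        * (n.descFactorial (k - 1) : ℝ) * (d.descFactorial 2 : ℝ) * (d : ℝ) ^ (k - 2)
        / ((n * d).descFactorial k : ℝ))
      Filter.atTop (nhds (((k : ℝ) - 1) * ((d : ℝ) - 1) / 2)) := by
  constructor
  · intro n m hkn hm
    exact Stmt6Aux.part_a hk hd n m hkn hm
  · exact part_b k d hk hd
end

section
/- For i ≠ j, the covariance of the indicators that the i-th and j-th edges of Y are simple loops satisfies Cov(I_i, I_j) ≤ binom(k,2)^2 * (n)_{k-1}^2 * (d)_2^2 * d^{2k-4} * ((nd)_k - (nd-k)_k) / ((nd)_{2k} * (nd)_k). -/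
open Finset

/-- number of occurrences of `v` in the pattern `s`. -/
def cnt {n r : ℕ} (s : Fin r → Fin n) (v : Fin n) : ℕ :=
  (Finset.univ.filter (fun t => s t = v)).card

/-- number of elements of `permSet n d` extending the pattern `s` at positions `p`. -/
def Fcnt (n d : ℕ) {r : ℕ} (p : Fin r → Fin (n * d)) (s : Fin r → Fin n) : ℕ :=
  ((permSet n d).filter (fun y => ∀ t, y (p t) = s t)).card

lemma mem_permSet {n d : ℕ} {y : Fin (n*d) → Fin n} :
    y ∈ permSet n d ↔ ∀ v, (Finset.univ.filter (fun i => y i = v)).card = d := by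
  simp [permSet]

lemma comp_mem_permSet {n d : ℕ} {y : Fin (n*d) → Fin n} (σ : Equiv.Perm (Fin (n*d)))
    (hy : y ∈ permSet n d) : y ∘ σ ∈ permSet n d := by
  rw [mem_permSet] at hy ⊢
  intro v
  have key : (Finset.univ.filter (fun i => (y ∘ σ) i = v)).card
      = (Finset.univ.filter (fun i => y i = v)).card := by
    apply Finset.card_bij (fun i _ => σ i)
    · intro a ha; simp only [mem_filter, mem_univ, true_and, Function.comp] at ha ⊢; exact ha
    · intro a _ b _ h; exact σ.injective h
    · intro b hb; simp only [mem_filter, mem_univ, true_and, Function.comp] at hb ⊢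
      exact ⟨σ.symm b, by simpa using hb, by simp⟩
  rw [key]; exact hy v

lemma snoc_constraint_iff {n d r : ℕ} (y : Fin (n*d) → Fin n) (p : Fin r → Fin (n*d))
    (q : Fin (n*d)) (s : Fin r → Fin n) (v : Fin n) :
    (∀ t : Fin (r+1), y ((Fin.snoc p q : Fin (r+1) → Fin (n*d)) t)
        = (Fin.snoc s v : Fin (r+1) → Fin n) t) ↔
      ((∀ u, y (p u) = s u) ∧ y q = v) := by
  constructor
  · intro h
    refine ⟨fun u => ?_, ?_⟩
    · have := h u.castSucc; simpa using this
    · have := h (Fin.last r); simpa using this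
  · rintro ⟨h1, h2⟩ t
    induction t using Fin.lastCases with
    | last => simpa using h2
    | cast u => simpa using h1 u

lemma Fcnt_swap {n d r : ℕ} (p : Fin r → Fin (n*d)) (s : Fin r → Fin n)
    (q q' : Fin (n*d)) (v : Fin n) (hq : ∀ t, p t ≠ q) (hq' : ∀ t, p t ≠ q') :
    Fcnt n d (Fin.snoc p q) (Fin.snoc s v) = Fcnt n d (Fin.snoc p q') (Fin.snoc s v) := by
  unfold Fcnt
  apply Finset.card_bij' (fun y _ => y ∘ (Equiv.swap q q')) (fun y _ => y ∘ (Equiv.swap q q'))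
  · intro y hy
    simp only [mem_filter, snoc_constraint_iff] at hy ⊢
    refine ⟨comp_mem_permSet _ hy.1, fun u => ?_, ?_⟩
    · simp only [Function.comp]
      rw [Equiv.swap_apply_of_ne_of_ne (hq u) (hq' u)]
      exact hy.2.1 u
    · simp only [Function.comp]
      rw [Equiv.swap_apply_right]
      exact hy.2.2
  · intro y hy
    simp only [mem_filter, snoc_constraint_iff] at hy ⊢
    refine ⟨comp_mem_permSet _ hy.1, fun u => ?_, ?_⟩
    · simp only [Function.comp]
      rw [Equiv.swap_apply_of_ne_of_ne (hq u) (hq' u)]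
      exact hy.2.1 u
    · simp only [Function.comp]
      rw [Equiv.swap_apply_left]
      exact hy.2.2
  · intro y _; funext x; simp
  · intro y _; funext x; simp

lemma cnt_snoc {n r : ℕ} (s : Fin r → Fin n) (v w : Fin n) :
    cnt (Fin.snoc s v : Fin (r+1) → Fin n) w = cnt s w + if v = w then 1 else 0 := by
  unfold cnt
  rw [Finset.card_filter, Finset.card_filter, Fin.sum_univ_castSucc]
  simp [Fin.snoc_castSucc, Fin.snoc_last]

lemma Fcnt_sum {n d r : ℕ} (p : Fin r → Fin (n*d)) (hp : Function.Injective p)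
    (s : Fin r → Fin n) (v : Fin n) :
    ∑ q ∈ Finset.univ \ Finset.univ.image p,
        Fcnt n d (Fin.snoc p q) (Fin.snoc s v)
      = (d - cnt s v) * Fcnt n d p s := by
  have hterm : ∀ q, Fcnt n d (Fin.snoc p q) (Fin.snoc s v)
      = (((permSet n d).filter (fun y => ∀ u, y (p u) = s u)).filter
          (fun y => y q = v)).card := by
    intro q
    unfold Fcnt
    rw [Finset.filter_filter]
    congr 1
    ext y
    simp only [mem_filter, and_congr_right_iff]
    intro _
    exact snoc_constraint_iff y p q s v
  calc ∑ q ∈ Finset.univ \ Finset.univ.image p, Fcnt n d (Fin.snoc p q) (Fin.snoc s v)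
      = ∑ q ∈ Finset.univ \ Finset.univ.image p,
          ∑ y ∈ (permSet n d).filter (fun y => ∀ u, y (p u) = s u),
            (if y q = v then 1 else 0) := by
        refine Finset.sum_congr rfl (fun q _ => ?_)
        rw [hterm q, Finset.card_filter]
    _ = ∑ y ∈ (permSet n d).filter (fun y => ∀ u, y (p u) = s u),
          ∑ q ∈ Finset.univ \ Finset.univ.image p, (if y q = v then 1 else 0) :=
        Finset.sum_comm
    _ = ∑ y ∈ (permSet n d).filter (fun y => ∀ u, y (p u) = s u), (d - cnt s v) := by
        refine Finset.sum_congr rfl (fun y hy => ?_)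
        rw [mem_filter] at hy
        rw [← Finset.card_filter]
        have hfs : (Finset.univ \ Finset.univ.image p).filter (fun q => y q = v)
            = Finset.univ.filter (fun q => y q = v)
              \ (Finset.univ.image p).filter (fun q => y q = v) := by
          ext a
          simp only [mem_filter, mem_sdiff, mem_univ, true_and]
          tauto
        rw [hfs, Finset.card_sdiff_of_subset (Finset.filter_subset_filter _ (Finset.subset_univ _))]
        have h1 : (Finset.univ.filter (fun q => y q = v)).card = d := mem_permSet.mp hy.1 v
        have h2 : ((Finset.univ.image p).filter (fun q => y q = v)).card = cnt s v := by
          have : (Finset.univ.image p).filter (fun q => y q = v)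
              = (Finset.univ.filter (fun u => s u = v)).image p := by
            ext a
            simp only [mem_filter, mem_image, mem_univ, true_and]
            constructor
            · rintro ⟨⟨u, rfl⟩, hv⟩; exact ⟨u, by rw [hy.2 u] at hv; exact hv, rfl⟩
            · rintro ⟨u, hu, rfl⟩; exact ⟨⟨u, rfl⟩, by rw [hy.2 u]; exact hu⟩
          rw [this, Finset.card_image_of_injective _ hp]
          rfl
        rw [h1, h2]
    _ = (d - cnt s v) * Fcnt n d p s := by
        rw [Finset.sum_const, smul_eq_mul, mul_comm]
        rfl

lemma Fcnt_eq {n d : ℕ} : ∀ {r : ℕ}, r ≤ n*d → ∀ (p : Fin r → Fin (n*d)),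
    Function.Injective p → ∀ (s : Fin r → Fin n),
    Fcnt n d p s * (n*d).descFactorial r
      = (permSet n d).card * ∏ v, d.descFactorial (cnt s v) := by
  intro r
  induction r with
  | zero =>
    intro _ p _ s
    have h1 : Fcnt n d p s = (permSet n d).card := by
      unfold Fcnt
      rw [Finset.filter_true_of_mem]
      intro y _
      exact fun t => t.elim0
    have h2 : ∀ v, cnt s v = 0 := by
      intro v; unfold cnt
      simp [Finset.filter_eq_empty_iff]
    simp [h1, h2]
  | succ r ih =>
    intro hr p hp s
    set p0 : Fin r → Fin (n*d) := Fin.init p with hp0def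
    set s0 : Fin r → Fin n := Fin.init s with hs0def
    set q : Fin (n*d) := p (Fin.last r) with hqdef
    set v : Fin n := s (Fin.last r) with hvdef
    have hps : p = Fin.snoc p0 q := (Fin.snoc_init_self p).symm
    have hss : s = Fin.snoc s0 v := (Fin.snoc_init_self s).symm
    have hp0 : Function.Injective p0 := by
      intro a b hab
      have : p a.castSucc = p b.castSucc := hab
      exact Fin.castSucc_injective r (hp this)
    have hqni : q ∉ Finset.univ.image p0 := by
      simp only [mem_image, mem_univ, true_and, not_exists]
      intro u hu
      have := hp hu
      exact (Fin.ne_last_of_lt (Fin.castSucc_lt_last u)) this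
    have hq : ∀ t, p0 t ≠ q := by
      intro t h
      exact hqni (Finset.mem_image.mpr ⟨t, Finset.mem_univ t, h⟩)
    -- all terms in the sum are equal
    have hsum := Fcnt_sum p0 hp0 s0 v
    have hconst : ∀ q' ∈ Finset.univ \ Finset.univ.image p0,
        Fcnt n d (Fin.snoc p0 q') (Fin.snoc s0 v) = Fcnt n d (Fin.snoc p0 q) (Fin.snoc s0 v) := by
      intro q' hq'
      simp only [mem_sdiff, mem_univ, true_and, mem_image, not_exists] at hq'
      exact Fcnt_swap p0 s0 q' q v (fun t h => hq' t h) hq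
    rw [Finset.sum_congr rfl hconst, Finset.sum_const, smul_eq_mul] at hsum
    have hcard : (Finset.univ \ Finset.univ.image p0).card = n*d - r := by
      rw [Finset.card_sdiff_of_subset (Finset.subset_univ _),
        Finset.card_image_of_injective _ hp0]
      simp
    rw [hcard] at hsum
    -- now assemble
    have hr0 : r ≤ n*d := Nat.le_of_succ_le hr
    have hih := ih hr0 p0 hp0 s0
    have hprod : ∏ w, d.descFactorial (cnt s w)
        = (d - cnt s0 v) * ∏ w, d.descFactorial (cnt s0 w) := by
      rw [← Finset.mul_prod_erase Finset.univ _ (Finset.mem_univ v),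
        ← Finset.mul_prod_erase Finset.univ (fun w => d.descFactorial (cnt s0 w))
          (Finset.mem_univ v)]
      have hv2 : cnt s v = cnt s0 v + 1 := by
        rw [hss, cnt_snoc]; simp
      have hother : ∀ w ∈ Finset.univ.erase v, cnt s w = cnt s0 w := by
        intro w hw
        rw [Finset.mem_erase] at hw
        rw [hss, cnt_snoc, if_neg (Ne.symm hw.1), Nat.add_zero]
      rw [hv2, Nat.descFactorial_succ,
        Finset.prod_congr rfl (fun w hw => by rw [hother w hw])]
      ring
    rw [Nat.descFactorial_succ, hprod]
    calc Fcnt n d p s * ((n*d - r) * (n*d).descFactorial r)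
        = ((n*d - r) * Fcnt n d (Fin.snoc p0 q) (Fin.snoc s0 v)) * (n*d).descFactorial r := by
          rw [hps, hss]; ring
      _ = ((d - cnt s0 v) * Fcnt n d p0 s0) * (n*d).descFactorial r := by rw [hsum]
      _ = (d - cnt s0 v) * (Fcnt n d p0 s0 * (n*d).descFactorial r) := by ring
      _ = (d - cnt s0 v) * ((permSet n d).card * ∏ w, d.descFactorial (cnt s0 w)) := by rw [hih]
      _ = (permSet n d).card * ((d - cnt s0 v) * ∏ w, d.descFactorial (cnt s0 w)) := by ring

def posf {n d : ℕ} (k i : ℕ) (h : k*i + k ≤ n*d) (t : Fin k) : Fin (n*d) :=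
  ⟨k*i + t.val, by have := t.isLt; omega⟩

lemma posf_inj {n d : ℕ} (k i : ℕ) (h : k*i + k ≤ n*d) : Function.Injective (posf k i h) := by
  intro a b hab
  have : k*i + a.val = k*i + b.val := congrArg Fin.val hab
  exact Fin.ext (by omega)

def loopSeq {n k : ℕ} (s : Fin k → Fin n) : Prop :=
  (Finset.univ.filter (fun v => cnt s v = 2)).card = 1 ∧ ∀ v, cnt s v ≤ 2

instance {n k : ℕ} : DecidablePred (loopSeq (n := n) (k := k)) := fun _ => by
  unfold loopSeq; infer_instance

lemma count_map_univ {n k : ℕ} (s : Fin k → Fin n) (w : Fin n) :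
    Multiset.count w (Multiset.map s Finset.univ.val) = cnt s w := by
  rw [Multiset.count_map]
  unfold cnt
  rw [Finset.card_def, Finset.filter_val]
  congr 1
  exact Multiset.filter_congr (fun a _ => eq_comm)

lemma edge_eq {n d : ℕ} (k i : ℕ) (h : k*i + k ≤ n*d) (y : Fin (n*d) → Fin n) :
    edgeOf k y i = Multiset.map (fun t => y (posf k i h t)) Finset.univ.val := by
  unfold edgeOf
  have h1 : Finset.range k = (Finset.univ : Finset (Fin k)).map Fin.valEmbedding := by
    rw [Fin.map_valEmbedding_univ]
    rw [Nat.Iio_eq_range]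
  rw [h1, Finset.map_val, Multiset.filterMap_map]
  have h2 : ((fun j => if h' : k * i + j < n * d then some (y ⟨k * i + j, h'⟩) else none)
        ∘ (Fin.valEmbedding : Fin k ↪ ℕ)) = some ∘ (fun t : Fin k => y (posf k i h t)) := by
    funext t
    have ht : k * i + t.val < n * d := by have := t.isLt; omega
    simp only [Function.comp, Fin.valEmbedding_apply, dif_pos ht]
    rfl
  rw [h2, Multiset.filterMap_eq_map]

lemma isSimpleLoop_edge {n d : ℕ} (k i : ℕ) (h : k*i + k ≤ n*d) (y : Fin (n*d) → Fin n) :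
    isSimpleLoop (edgeOf k y i) ↔ loopSeq (fun t => y (posf k i h t)) := by
  rw [edge_eq k i h y]
  unfold isSimpleLoop loopSeq
  simp only [count_map_univ]

lemma card_marginal {n d : ℕ} (k i : ℕ) (h : k*i + k ≤ n*d) :
    ((permSet n d).filter (fun y => isSimpleLoop (edgeOf k y i))).card
      = ∑ s ∈ (Finset.univ : Finset (Fin k → Fin n)).filter loopSeq,
          Fcnt n d (posf k i h) s := by
  rw [Finset.card_eq_sum_card_fiberwise (f := fun y => (fun t => y (posf k i h t)))
    (t := (Finset.univ : Finset (Fin k → Fin n)).filter loopSeq)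
    (fun y hy => by
      rw [Finset.mem_coe, mem_filter] at hy
      exact Finset.mem_filter.mpr ⟨Finset.mem_univ _, (isSimpleLoop_edge k i h y).mp hy.2⟩)]
  refine Finset.sum_congr rfl (fun s hs => ?_)
  unfold Fcnt
  congr 1
  rw [Finset.filter_filter]
  ext y
  simp only [mem_filter]
  constructor
  · rintro ⟨hy, _, hfs⟩
    exact ⟨hy, fun t => congrFun hfs t⟩
  · rintro ⟨hy, hts⟩
    have hfs : (fun t => y (posf k i h t)) = s := funext hts
    refine ⟨hy, ?_, hfs⟩
    rw [isSimpleLoop_edge k i h y, hfs]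
    exact (Finset.mem_filter.mp hs).2

lemma cnt_append {n k : ℕ} (s t : Fin k → Fin n) (v : Fin n) :
    cnt (Fin.append s t : Fin (k+k) → Fin n) v = cnt s v + cnt t v := by
  unfold cnt
  rw [Finset.card_filter, Finset.card_filter, Finset.card_filter, Fin.sum_univ_add]
  simp only [Fin.append_left, Fin.append_right]

lemma append_constraint_iff {n d k : ℕ} (y : Fin (n*d) → Fin n) (p p' : Fin k → Fin (n*d))
    (s t : Fin k → Fin n) :
    (∀ u : Fin (k+k), y ((Fin.append p p' : Fin (k+k) → Fin (n*d)) u)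
        = (Fin.append s t : Fin (k+k) → Fin n) u)
      ↔ ((∀ a, y (p a) = s a) ∧ (∀ b, y (p' b) = t b)) := by
  constructor
  · intro hh
    constructor
    · intro a; have := hh (Fin.castAdd k a)
      rwa [Fin.append_left, Fin.append_left] at this
    · intro b; have := hh (Fin.natAdd k b)
      rwa [Fin.append_right, Fin.append_right] at this
  · rintro ⟨h1, h2⟩ u
    induction u using Fin.addCases with
    | left a =>
      rw [Fin.append_left, Fin.append_left]; exact h1 a
    | right b =>
      rw [Fin.append_right, Fin.append_right]; exact h2 b

lemma append_posf_inj {n d : ℕ} (k i j : ℕ) (hi : k*i + k ≤ n*d) (hj : k*j + k ≤ n*d)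
    (hij : i ≠ j) :
    Function.Injective (Fin.append (posf k i hi) (posf k j hj)) := by
  have key : ∀ (u : Fin (k+k)),
      ((Fin.append (posf k i hi) (posf k j hj)) u).val
        = (if u.val < k then k*i + u.val else k*j + (u.val - k)) := by
    intro u
    induction u using Fin.addCases with
    | left a =>
      rw [Fin.append_left]
      have := a.isLt
      simp [posf, this]
    | right b =>
      rw [Fin.append_right]
      have : ¬ (k + b.val < k) := by omega
      simp [posf, this]
  intro u w huw
  have hv := congrArg Fin.val huw
  rw [key u, key w] at hv
  have hu := u.isLt
  have hw := w.isLt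
  have hcross : ∀ a b : ℕ, a < k → b < k → k*i + a ≠ k*j + b := by
    intro a b ha hb heq
    rcases Nat.lt_or_ge i j with hlt | hge
    · have h1 : k*(i+1) ≤ k*j := Nat.mul_le_mul_left k hlt
      have h2 : k*(i+1) = k*i + k := by ring
      omega
    · have hlt : j < i := by omega
      have h1 : k*(j+1) ≤ k*i := Nat.mul_le_mul_left k hlt
      have h2 : k*(j+1) = k*j + k := by ring
      omega
  apply Fin.ext
  by_cases h1 : u.val < k <;> by_cases h2 : w.val < k
  · rw [if_pos h1, if_pos h2] at hv; omega
  · rw [if_pos h1, if_neg h2] at hv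
    exact absurd hv (hcross _ _ h1 (by omega))
  · rw [if_neg h1, if_pos h2] at hv
    exact absurd hv.symm (hcross _ _ h2 (by omega))
  · rw [if_neg h1, if_neg h2] at hv; omega

lemma card_joint {n d : ℕ} (k i j : ℕ) (hi : k*i + k ≤ n*d) (hj : k*j + k ≤ n*d) :
    ((permSet n d).filter
        (fun y => isSimpleLoop (edgeOf k y i) ∧ isSimpleLoop (edgeOf k y j))).card
      = ∑ st ∈ ((Finset.univ : Finset (Fin k → Fin n)).filter loopSeq) ×ˢ
            ((Finset.univ : Finset (Fin k → Fin n)).filter loopSeq),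
          Fcnt n d (Fin.append (posf k i hi) (posf k j hj)) (Fin.append st.1 st.2) := by
  rw [Finset.card_eq_sum_card_fiberwise
    (f := fun y => ((fun t => y (posf k i hi t)), (fun t => y (posf k j hj t))))
    (t := ((Finset.univ : Finset (Fin k → Fin n)).filter loopSeq) ×ˢ
            ((Finset.univ : Finset (Fin k → Fin n)).filter loopSeq))
    (fun y hy => by
      rw [Finset.mem_coe, mem_filter] at hy
      rw [Finset.mem_coe, Finset.mem_product]
      exact ⟨Finset.mem_filter.mpr ⟨Finset.mem_univ _, (isSimpleLoop_edge k i hi y).mp hy.2.1⟩,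
        Finset.mem_filter.mpr ⟨Finset.mem_univ _, (isSimpleLoop_edge k j hj y).mp hy.2.2⟩⟩)]
  refine Finset.sum_congr rfl (fun st hst => ?_)
  unfold Fcnt
  congr 1
  rw [Finset.filter_filter]
  ext y
  simp only [mem_filter, append_constraint_iff, Prod.ext_iff]
  constructor
  · rintro ⟨hy, _, hf1, hf2⟩
    exact ⟨hy, fun a => congrFun hf1 a, fun b => congrFun hf2 b⟩
  · rintro ⟨hy, ha, hb⟩
    have hf1 : (fun t => y (posf k i hi t)) = st.1 := funext ha
    have hf2 : (fun t => y (posf k j hj t)) = st.2 := funext hb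
    rw [Finset.mem_product, mem_filter, mem_filter] at hst
    refine ⟨hy, ⟨?_, ?_⟩, hf1, hf2⟩
    · rw [isSimpleLoop_edge k i hi y, hf1]; exact hst.1.2
    · rw [isSimpleLoop_edge k j hj y, hf2]; exact hst.2.2

lemma permSet_nonempty {n d : ℕ} (hd : 0 < d) : (permSet n d).Nonempty := by
  refine ⟨fun i => ⟨i.val / d, (Nat.div_lt_iff_lt_mul hd).mpr i.isLt⟩, ?_⟩
  rw [mem_permSet]
  intro v
  have : (Finset.univ.filter
      (fun i : Fin (n*d) => (⟨i.val / d, (Nat.div_lt_iff_lt_mul hd).mpr i.isLt⟩ : Fin n) = v)).card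
      = (Finset.univ : Finset (Fin d)).card := by
    refine Finset.card_bij' (fun a _ => (⟨a.val % d, Nat.mod_lt _ hd⟩ : Fin d))
      (fun b _ => (⟨v.val * d + b.val, by
        have hb := b.isLt
        have h1 : (v.val + 1) * d ≤ n * d := Nat.mul_le_mul_right d v.isLt
        have h2 : (v.val + 1) * d = v.val * d + d := by ring
        omega⟩ : Fin (n*d))) ?_ ?_ ?_ ?_
    · intro a _; exact Finset.mem_univ _
    · intro b _
      simp only [Finset.mem_filter, Finset.mem_univ, true_and]
      apply Fin.ext
      show (v.val * d + b.val) / d = v.val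
      rw [mul_comm v.val d, Nat.mul_add_div hd, Nat.div_eq_of_lt b.isLt, Nat.add_zero]
    · intro a ha
      simp only [Finset.mem_filter, Finset.mem_univ, true_and] at ha
      have hav : a.val / d = v.val := congrArg Fin.val ha
      apply Fin.ext
      show v.val * d + a.val % d = a.val
      have h1 := Nat.div_add_mod a.val d
      have h2 : v.val * d = d * (a.val / d) := by rw [hav]; ring
      omega
    · intro b _
      apply Fin.ext
      show (v.val * d + b.val) % d = b.val
      rw [mul_comm v.val d, Nat.mul_add_mod, Nat.mod_eq_of_lt b.isLt]
  rw [this]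
  simp

lemma descFactorial_add_le (d a b : ℕ) :
    d.descFactorial (a+b) ≤ d.descFactorial a * d.descFactorial b := by
  induction b with
  | zero => simp
  | succ b ih =>
    rw [← Nat.add_assoc, Nat.descFactorial_succ, Nat.descFactorial_succ]
    calc (d - (a+b)) * d.descFactorial (a+b)
        ≤ (d - b) * (d.descFactorial a * d.descFactorial b) :=
          Nat.mul_le_mul (Nat.sub_le_sub_left (Nat.le_add_left b a) d) ih
      _ = d.descFactorial a * ((d-b) * d.descFactorial b) := by ring

lemma descFactorial_add (x a b : ℕ) :
    x.descFactorial (a+b) = x.descFactorial a * (x-a).descFactorial b := by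
  induction b with
  | zero => simp
  | succ b ih =>
    rw [← Nat.add_assoc, Nat.descFactorial_succ, Nat.descFactorial_succ, ih, Nat.sub_sub]
    ring

lemma loop_sum_cnt {n k : ℕ} (s : Fin k → Fin n) : ∑ v, cnt s v = k := by
  have := Finset.card_eq_sum_card_fiberwise (f := s) (s := (Finset.univ : Finset (Fin k)))
    (t := (Finset.univ : Finset (Fin n))) (fun x _ => Finset.mem_univ _)
  unfold cnt
  simpa using this.symm

lemma loop_prod {n k d : ℕ} (s : Fin k → Fin n) (hs : loopSeq s) :
    ∏ v, d.descFactorial (cnt s v) = d.descFactorial 2 * d ^ (k - 2) := by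
  have hsplit1 := Finset.prod_filter_mul_prod_filter_not Finset.univ
      (fun v => cnt s v = 2) (fun v => d.descFactorial (cnt s v))
  have hsplit2 := Finset.prod_filter_mul_prod_filter_not
      (Finset.univ.filter (fun v => ¬ cnt s v = 2)) (fun v => cnt s v = 1)
      (fun v => d.descFactorial (cnt s v))
  have hB : (Finset.univ.filter (fun v => ¬ cnt s v = 2)).filter (fun v => cnt s v = 1)
      = Finset.univ.filter (fun v => cnt s v = 1) := by
    ext v; simp only [Finset.mem_filter, Finset.mem_univ, true_and]; omega
  have hcardB : (Finset.univ.filter (fun v : Fin n => cnt s v = 1)).card = k - 2 := by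
    have hsum := loop_sum_cnt s
    have hs1 := Finset.sum_filter_add_sum_filter_not Finset.univ
      (fun v => cnt s v = 2) (fun v => cnt s v)
    have hs2 := Finset.sum_filter_add_sum_filter_not
      (Finset.univ.filter (fun v => ¬ cnt s v = 2)) (fun v => cnt s v = 1)
      (fun v => cnt s v)
    have hA : ∑ v ∈ Finset.univ.filter (fun v => cnt s v = 2), cnt s v
        = 2 * (Finset.univ.filter (fun v : Fin n => cnt s v = 2)).card := by
      rw [Finset.sum_congr rfl (fun v hv => (Finset.mem_filter.mp hv).2), Finset.sum_const]
      ring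
    have hBs : ∑ v ∈ (Finset.univ.filter (fun v => ¬ cnt s v = 2)).filter
          (fun v => cnt s v = 1), cnt s v
        = (Finset.univ.filter (fun v : Fin n => cnt s v = 1)).card := by
      rw [hB, Finset.sum_congr rfl (fun v hv => (Finset.mem_filter.mp hv).2), Finset.sum_const]
      ring
    have hCs : ∑ v ∈ (Finset.univ.filter (fun v => ¬ cnt s v = 2)).filter
          (fun v => ¬ cnt s v = 1), cnt s v = 0 := by
      refine Finset.sum_eq_zero (fun v hv => ?_)
      simp only [Finset.mem_filter, Finset.mem_univ, true_and] at hv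
      have := hs.2 v
      omega
    have hcard1 := hs.1
    omega
  have h0 : ∏ v ∈ (Finset.univ.filter (fun v => ¬ cnt s v = 2)).filter
        (fun v => ¬ cnt s v = 1), d.descFactorial (cnt s v) = 1 := by
    refine Finset.prod_eq_one (fun v hv => ?_)
    simp only [Finset.mem_filter, Finset.mem_univ, true_and] at hv
    have h2 := hs.2 v
    have : cnt s v = 0 := by omega
    rw [this]
    rfl
  have e1 : ∏ v ∈ Finset.univ.filter (fun v : Fin n => cnt s v = 2),
      d.descFactorial (cnt s v) = d.descFactorial 2 := by
    rw [Finset.prod_congr rfl (fun v hv => by rw [(Finset.mem_filter.mp hv).2]),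
      Finset.prod_const, hs.1, pow_one]
  have e2 : ∏ v ∈ Finset.univ.filter (fun v : Fin n => cnt s v = 1),
      d.descFactorial (cnt s v) = d ^ (k - 2) := by
    rw [Finset.prod_congr rfl (fun v hv => by rw [(Finset.mem_filter.mp hv).2]),
      Finset.prod_const, hcardB, Nat.descFactorial_one]
  calc ∏ v, d.descFactorial (cnt s v)
      = (∏ v ∈ Finset.univ.filter (fun v => cnt s v = 2), d.descFactorial (cnt s v))
        * ((∏ v ∈ (Finset.univ.filter (fun v => ¬ cnt s v = 2)).filter (fun v => cnt s v = 1),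
              d.descFactorial (cnt s v))
          * ∏ v ∈ (Finset.univ.filter (fun v => ¬ cnt s v = 2)).filter (fun v => ¬ cnt s v = 1),
              d.descFactorial (cnt s v)) := by rw [← hsplit1, ← hsplit2]
    _ = d.descFactorial 2 * d ^ (k - 2) := by rw [h0, hB, e1, e2, Nat.mul_one]

def posSet {n k : ℕ} (s : Fin k → Fin n) : Finset (Fin k) :=
  Finset.univ.filter (fun t => cnt s (s t) = 2)

lemma posSet_card {n k : ℕ} (s : Fin k → Fin n) (hs : loopSeq s) : (posSet s).card = 2 := by
  obtain ⟨v0, hv0⟩ := Finset.card_eq_one.mp hs.1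
  have hv0mem : cnt s v0 = 2 := by
    have : v0 ∈ Finset.univ.filter (fun v => cnt s v = 2) :=
      hv0 ▸ Finset.mem_singleton_self v0
    exact (Finset.mem_filter.mp this).2
  have heq : posSet s = Finset.univ.filter (fun t => s t = v0) := by
    ext t
    simp only [posSet, Finset.mem_filter, Finset.mem_univ, true_and]
    constructor
    · intro h
      have : s t ∈ Finset.univ.filter (fun v => cnt s v = 2) :=
        Finset.mem_filter.mpr ⟨Finset.mem_univ _, h⟩
      rw [hv0] at this
      exact Finset.mem_singleton.mp this
    · intro h; rw [h]; exact hv0mem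
  rw [heq]
  exact hv0mem

lemma repeated_eq {n k : ℕ} {s : Fin k → Fin n} (hs : loopSeq s) {a b : Fin k}
    (ha : a ∈ posSet s) (hb : b ∈ posSet s) : s a = s b := by
  obtain ⟨v0, hv0⟩ := Finset.card_eq_one.mp hs.1
  have h1 : s a ∈ Finset.univ.filter (fun v => cnt s v = 2) :=
    Finset.mem_filter.mpr ⟨Finset.mem_univ _, (Finset.mem_filter.mp ha).2⟩
  have h2 : s b ∈ Finset.univ.filter (fun v => cnt s v = 2) :=
    Finset.mem_filter.mpr ⟨Finset.mem_univ _, (Finset.mem_filter.mp hb).2⟩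
  rw [hv0, Finset.mem_singleton] at h1 h2
  rw [h1, h2]

lemma loop_count_le {n k : ℕ} :
    ((Finset.univ : Finset (Fin k → Fin n)).filter loopSeq).card
      ≤ k.choose 2 * n.descFactorial (k-1) := by
  classical
  have hsub : (Finset.univ : Finset (Fin k → Fin n)).filter loopSeq ⊆
      (Finset.univ.powersetCard 2).biUnion
        (fun P => Finset.univ.filter (fun s => loopSeq s ∧ posSet s = P)) := by
    intro s hs
    rw [Finset.mem_filter] at hs
    exact Finset.mem_biUnion.mpr ⟨posSet s,
      Finset.mem_powersetCard_univ.mpr (posSet_card s hs.2),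
      Finset.mem_filter.mpr ⟨Finset.mem_univ _, hs.2, rfl⟩⟩
  refine le_trans (Finset.card_le_card hsub) (le_trans Finset.card_biUnion_le ?_)
  have hbound : ∀ P ∈ Finset.univ.powersetCard 2,
      (Finset.univ.filter (fun s : Fin k → Fin n => loopSeq s ∧ posSet s = P)).card
        ≤ n.descFactorial (k-1) := by
    intro P hP
    have hPcard : P.card = 2 := Finset.mem_powersetCard_univ.mp hP
    obtain ⟨b, hb⟩ : P.Nonempty := Finset.card_pos.mp (by omega)
    obtain ⟨a, haP, hab⟩ : ∃ a ∈ P, a ≠ b := by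
      have h1 : (P.erase b).card = 1 := by rw [Finset.card_erase_of_mem hb, hPcard]
      obtain ⟨a, ha⟩ := Finset.card_eq_one.mp h1
      have hamem := ha ▸ Finset.mem_singleton_self a
      exact ⟨a, Finset.mem_of_mem_erase hamem, Finset.ne_of_mem_erase hamem⟩
    have htarget : (Finset.univ.filter
        (fun g : ({t : Fin k // t ≠ b} → Fin n) => Function.Injective g)).card
        = n.descFactorial (k-1) := by
      rw [← Fintype.card_subtype]
      rw [Fintype.card_congr (Equiv.subtypeInjectiveEquivEmbedding _ _)]
      rw [Fintype.card_embedding_eq, Fintype.card_fin]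
      congr 1
      rw [Fintype.card_subtype_compl, Fintype.card_subtype_eq, Fintype.card_fin]
    rw [← htarget]
    apply Finset.card_le_card_of_injOn (fun s => fun t : {t : Fin k // t ≠ b} => s t.val)
    · intro s hsmem
      rw [Finset.mem_coe, Finset.mem_filter] at hsmem
      obtain ⟨-, hsl, hsP⟩ := hsmem
      refine Finset.mem_filter.mpr ⟨Finset.mem_univ _, ?_⟩
      intro t1 t2 h12
      by_contra hne
      have hvne : t1.val ≠ t2.val := fun h => hne (Subtype.ext h)
      have hfib : ({t1.val, t2.val} : Finset (Fin k)) ⊆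
          Finset.univ.filter (fun t => s t = s t1.val) := by
        intro x hx
        rcases Finset.mem_insert.mp hx with h | h
        · subst h; exact Finset.mem_filter.mpr ⟨Finset.mem_univ _, rfl⟩
        · rw [Finset.mem_singleton] at h; subst h
          exact Finset.mem_filter.mpr ⟨Finset.mem_univ _, h12.symm⟩
      have hcard2 : 2 ≤ cnt s (s t1.val) := by
        have hc : ({t1.val, t2.val} : Finset (Fin k)).card = 2 := by
          rw [Finset.card_insert_of_notMem (by simp [hvne]), Finset.card_singleton]
        calc 2 = ({t1.val, t2.val} : Finset (Fin k)).card := hc.symm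
          _ ≤ _ := Finset.card_le_card hfib
      have hc2 : cnt s (s t1.val) = 2 := le_antisymm (hsl.2 _) hcard2
      have ht1 : t1.val ∈ posSet s := Finset.mem_filter.mpr ⟨Finset.mem_univ _, hc2⟩
      have ht2 : t2.val ∈ posSet s := by
        refine Finset.mem_filter.mpr ⟨Finset.mem_univ _, ?_⟩
        rw [show s t2.val = s t1.val from h12.symm]
        exact hc2
      rw [hsP] at ht1 ht2
      have ht1e : t1.val ∈ P.erase b := Finset.mem_erase.mpr ⟨t1.2, ht1⟩
      have ht2e : t2.val ∈ P.erase b := Finset.mem_erase.mpr ⟨t2.2, ht2⟩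
      have h1 : (P.erase b).card = 1 := by rw [Finset.card_erase_of_mem hb, hPcard]
      exact hvne (Finset.card_le_one.mp (le_of_eq h1) _ ht1e _ ht2e)
    · intro s hs s' hs' heq
      simp only [Finset.coe_filter, Set.mem_setOf_eq] at hs hs'
      obtain ⟨-, hsl, hsP⟩ := hs
      obtain ⟨-, hsl', hsP'⟩ := hs'
      have hoff : ∀ t : Fin k, (ht : t ≠ b) → s t = s' t := fun t ht =>
        congrFun heq (⟨t, ht⟩ : {t : Fin k // t ≠ b})
      have hbP : b ∈ posSet s := by rw [hsP]; exact hb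
      have haPs : a ∈ posSet s := by rw [hsP]; exact haP
      have hbP' : b ∈ posSet s' := by rw [hsP']; exact hb
      have haPs' : a ∈ posSet s' := by rw [hsP']; exact haP
      have hsb : s b = s a := repeated_eq hsl hbP haPs
      have hsb' : s' b = s' a := repeated_eq hsl' hbP' haPs'
      funext t
      by_cases ht : t = b
      · subst ht; rw [hsb, hsb', hoff a hab]
      · exact hoff t ht
  calc ∑ P ∈ Finset.univ.powersetCard 2,
        (Finset.univ.filter (fun s : Fin k → Fin n => loopSeq s ∧ posSet s = P)).card
      ≤ ∑ _P ∈ Finset.univ.powersetCard 2, n.descFactorial (k-1) :=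
        Finset.sum_le_sum hbound
    _ = k.choose 2 * n.descFactorial (k-1) := by
        rw [Finset.sum_const, smul_eq_mul, Finset.card_powersetCard, Finset.card_univ,
          Fintype.card_fin]
/-- For `i ≠ j`, the covariance of the indicators that the `i`-th and `j`-th edges of a
uniformly random permutation `Y` are simple loops satisfies
`Cov(I_i,I_j) ≤ C(k,2)^2 (n)_{k-1}^2 (d)_2^2 d^{2k-4} ((nd)_k - (nd-k)_k) / ((nd)_{2k} (nd)_k)`. -/
theorem stmt7 (n d k m : ℕ) (hk : 3 ≤ k) (hn : k ≤ n) (hd : 2 ≤ d) (hm : n * d = k * m)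
    (h2k : 2 * k ≤ n * d) (i j : ℕ) (hi : i < m) (hj : j < m) (hij : i ≠ j) :
    (((permSet n d).filter
          (fun y => isSimpleLoop (edgeOf k y i) ∧ isSimpleLoop (edgeOf k y j))).card : ℝ)
        / ((permSet n d).card : ℝ)
      - ((((permSet n d).filter (fun y => isSimpleLoop (edgeOf k y i))).card : ℝ)
            / ((permSet n d).card : ℝ))
        * ((((permSet n d).filter (fun y => isSimpleLoop (edgeOf k y j))).card : ℝ)
            / ((permSet n d).card : ℝ))
      ≤ (k.choose 2 : ℝ) ^ 2 * (n.descFactorial (k - 1) : ℝ) ^ 2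
          * (d.descFactorial 2 : ℝ) ^ 2 * (d : ℝ) ^ (2 * k - 4)
          * (((n * d).descFactorial k - (n * d - k).descFactorial k : ℕ) : ℝ)
          / (((n * d).descFactorial (2 * k) : ℝ) * ((n * d).descFactorial k : ℝ)) := by
  have hik : k*i + k ≤ n*d := by
    have h1 : k*(i+1) ≤ k*m := Nat.mul_le_mul_left k hi
    have h2 : k*(i+1) = k*i + k := by ring
    omega
  have hjk : k*j + k ≤ n*d := by
    have h1 : k*(j+1) ≤ k*m := Nat.mul_le_mul_left k hj
    have h2 : k*(j+1) = k*j + k := by ring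
    omega
  set N := (permSet n d).card with hNdef
  set L := ∑ s ∈ ((Finset.univ : Finset (Fin k → Fin n)).filter loopSeq),
      ∏ v, d.descFactorial (cnt s v) with hLdef
  set A := ((permSet n d).filter
      (fun y => isSimpleLoop (edgeOf k y i) ∧ isSimpleLoop (edgeOf k y j))).card with hAdef
  set B := ((permSet n d).filter (fun y => isSimpleLoop (edgeOf k y i))).card with hBdef
  set C := ((permSet n d).filter (fun y => isSimpleLoop (edgeOf k y j))).card with hCdef
  -- Nat-level facts
  have hB : B * (n*d).descFactorial k = N * L := by
    rw [hBdef, card_marginal k i hik, Finset.sum_mul, hLdef, Finset.mul_sum]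
    exact Finset.sum_congr rfl (fun s _ => Fcnt_eq (by omega) _ (posf_inj k i hik) s)
  have hC : C * (n*d).descFactorial k = N * L := by
    rw [hCdef, card_marginal k j hjk, Finset.sum_mul, hLdef, Finset.mul_sum]
    exact Finset.sum_congr rfl (fun s _ => Fcnt_eq (by omega) _ (posf_inj k j hjk) s)
  have hA : A * (n*d).descFactorial (2*k) ≤ N * (L * L) := by
    rw [two_mul, hAdef, card_joint k i j hik hjk, Finset.sum_mul]
    have step1 : ∀ st ∈ ((Finset.univ : Finset (Fin k → Fin n)).filter loopSeq) ×ˢ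
          ((Finset.univ : Finset (Fin k → Fin n)).filter loopSeq),
        Fcnt n d (Fin.append (posf k i hik) (posf k j hjk)) (Fin.append st.1 st.2)
            * (n*d).descFactorial (k+k)
          ≤ N * ((∏ v, d.descFactorial (cnt st.1 v)) * (∏ v, d.descFactorial (cnt st.2 v))) := by
      intro st _
      rw [Fcnt_eq (by omega) _ (append_posf_inj k i j hik hjk hij) _]
      apply Nat.mul_le_mul_left
      calc ∏ v, d.descFactorial (cnt (Fin.append st.1 st.2) v)
          = ∏ v, d.descFactorial (cnt st.1 v + cnt st.2 v) := by
            exact Finset.prod_congr rfl (fun v _ => by rw [cnt_append])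
        _ ≤ ∏ v, d.descFactorial (cnt st.1 v) * d.descFactorial (cnt st.2 v) :=
            Finset.prod_le_prod' (fun v _ => descFactorial_add_le d _ _)
        _ = (∏ v, d.descFactorial (cnt st.1 v)) * (∏ v, d.descFactorial (cnt st.2 v)) :=
            Finset.prod_mul_distrib
    calc ∑ st ∈ ((Finset.univ : Finset (Fin k → Fin n)).filter loopSeq) ×ˢ
          ((Finset.univ : Finset (Fin k → Fin n)).filter loopSeq),
          Fcnt n d (Fin.append (posf k i hik) (posf k j hjk)) (Fin.append st.1 st.2)
            * (n*d).descFactorial (k+k)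
        ≤ ∑ st ∈ ((Finset.univ : Finset (Fin k → Fin n)).filter loopSeq) ×ˢ
          ((Finset.univ : Finset (Fin k → Fin n)).filter loopSeq),
          N * ((∏ v, d.descFactorial (cnt st.1 v)) * (∏ v, d.descFactorial (cnt st.2 v))) :=
          Finset.sum_le_sum step1
      _ = N * (L * L) := by
          rw [hLdef, Finset.sum_mul_sum, Finset.mul_sum, Finset.sum_product]
          exact Finset.sum_congr rfl (fun s _ => by rw [Finset.mul_sum])
  have hLle : L ≤ k.choose 2 * n.descFactorial (k-1) * (d.descFactorial 2 * d^(k-2)) := by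
    have hLval : L = ((Finset.univ : Finset (Fin k → Fin n)).filter loopSeq).card
        * (d.descFactorial 2 * d^(k-2)) := by
      rw [hLdef,
        Finset.sum_congr rfl (fun s hs => loop_prod s (Finset.mem_filter.mp hs).2),
        Finset.sum_const, smul_eq_mul]
    rw [hLval]
    exact Nat.mul_le_mul_right _ loop_count_le
  have hN : 0 < N := Finset.card_pos.mpr (permSet_nonempty (by omega))
  have hD1 : 0 < (n*d).descFactorial k :=
    Nat.pos_of_ne_zero (fun h => by have := Nat.descFactorial_eq_zero_iff_lt.mp h; omega)
  have hD2 : 0 < (n*d).descFactorial (2*k) :=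
    Nat.pos_of_ne_zero (fun h => by have := Nat.descFactorial_eq_zero_iff_lt.mp h; omega)
  have hE : 0 < (n*d - k).descFactorial k :=
    Nat.pos_of_ne_zero (fun h => by have := Nat.descFactorial_eq_zero_iff_lt.mp h; omega)
  have hEle : (n*d - k).descFactorial k ≤ (n*d).descFactorial k :=
    Nat.descFactorial_le k (Nat.sub_le _ _)
  have hD2eq : (n*d).descFactorial (2*k)
      = (n*d).descFactorial k * (n*d - k).descFactorial k := by
    rw [two_mul, descFactorial_add]
  -- real versions
  have hNr : (0:ℝ) < (N:ℝ) := by exact_mod_cast hN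
  have hD1r : (0:ℝ) < ((n*d).descFactorial k : ℝ) := by exact_mod_cast hD1
  have hD2r : (0:ℝ) < ((n*d).descFactorial (2*k) : ℝ) := by exact_mod_cast hD2
  have hEr : (0:ℝ) < ((n*d - k).descFactorial k : ℝ) := by exact_mod_cast hE
  have hBr : (B:ℝ)/(N:ℝ) = (L:ℝ) / ((n*d).descFactorial k : ℝ) := by
    rw [div_eq_div_iff hNr.ne' hD1r.ne']
    have : (B:ℝ) * ((n*d).descFactorial k : ℝ) = (N:ℝ) * (L:ℝ) := by exact_mod_cast hB
    linarith
  have hCr : (C:ℝ)/(N:ℝ) = (L:ℝ) / ((n*d).descFactorial k : ℝ) := by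
    rw [div_eq_div_iff hNr.ne' hD1r.ne']
    have : (C:ℝ) * ((n*d).descFactorial k : ℝ) = (N:ℝ) * (L:ℝ) := by exact_mod_cast hC
    linarith
  have hAr : (A:ℝ)/(N:ℝ) ≤ (L:ℝ)^2 / ((n*d).descFactorial (2*k) : ℝ) := by
    rw [div_le_div_iff₀ hNr hD2r]
    have : (A:ℝ) * ((n*d).descFactorial (2*k) : ℝ) ≤ (N:ℝ) * ((L:ℝ) * (L:ℝ)) := by
      exact_mod_cast hA
    nlinarith
  have hD2eqr : ((n*d).descFactorial (2*k) : ℝ)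
      = ((n*d).descFactorial k : ℝ) * ((n*d - k).descFactorial k : ℝ) := by exact_mod_cast hD2eq
  calc (A:ℝ)/(N:ℝ) - ((B:ℝ)/(N:ℝ)) * ((C:ℝ)/(N:ℝ))
      ≤ (L:ℝ)^2 / ((n*d).descFactorial (2*k) : ℝ)
        - ((L:ℝ) / ((n*d).descFactorial k : ℝ)) * ((L:ℝ) / ((n*d).descFactorial k : ℝ)) := by
        rw [hBr, hCr]
        exact sub_le_sub_right hAr _
    _ = (L:ℝ)^2 * (((n*d).descFactorial k : ℝ) - ((n*d - k).descFactorial k : ℝ))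
          / (((n*d).descFactorial (2*k) : ℝ) * ((n*d).descFactorial k : ℝ)) := by
        rw [hD2eqr]
        field_simp
    _ ≤ ((k.choose 2 * n.descFactorial (k-1) * (d.descFactorial 2 * d^(k-2)) : ℕ) : ℝ)^2
          * (((n*d).descFactorial k : ℝ) - ((n*d - k).descFactorial k : ℝ))
          / (((n*d).descFactorial (2*k) : ℝ) * ((n*d).descFactorial k : ℝ)) := by
        have hnum : ((n*d).descFactorial k : ℝ) - ((n*d - k).descFactorial k : ℝ) ≥ 0 := by
          have : ((n*d - k).descFactorial k : ℝ) ≤ ((n*d).descFactorial k : ℝ) := by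
            exact_mod_cast hEle
          linarith
        have hLr : (L:ℝ) ≤ ((k.choose 2 * n.descFactorial (k-1)
            * (d.descFactorial 2 * d^(k-2)) : ℕ) : ℝ) := by exact_mod_cast hLle
        have hLnn : (0:ℝ) ≤ (L:ℝ) := Nat.cast_nonneg L
        gcongr
    _ = (k.choose 2 : ℝ) ^ 2 * (n.descFactorial (k - 1) : ℝ) ^ 2
          * (d.descFactorial 2 : ℝ) ^ 2 * (d : ℝ) ^ (2 * k - 4)
          * (((n * d).descFactorial k - (n * d - k).descFactorial k : ℕ) : ℝ)
          / (((n * d).descFactorial (2 * k) : ℝ) * ((n * d).descFactorial k : ℝ)) := by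
        congr 1
        have hcast : (((n * d).descFactorial k - (n * d - k).descFactorial k : ℕ) : ℝ)
            = ((n*d).descFactorial k : ℝ) - ((n*d - k).descFactorial k : ℝ) :=
          Nat.cast_sub hEle
        rw [hcast]
        have hpow : ((d:ℝ) ^ (k-2))^2 = (d:ℝ) ^ (2*k - 4) := by
          rw [← pow_mul]
          congr 1
          omega
        push_cast
        rw [← hpow]
        ring
end

section
/- Let y ∈ E_l be a permutation whose associated k-multigraph has exactly l ≥ 1 simple loops, no multiple edges, m = nd/k edges total, and max degree d. Then the number of forward switchings applicable to y is at most l·k^2·m^2 = n^2 d^2 l, and at least k^2 · l · (m - l - 2k^2 d^2)^2. -/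
/-- An edge (multiset of vertices) is a *loop* if some vertex has multiplicity ≥ 2. -/
def isLoopE {n : ℕ} (e : Multiset (Fin n)) : Prop := ∃ v, 2 ≤ e.count v

instance {n : ℕ} : DecidablePred (isLoopE (n := n)) := fun _ => by
  unfold isLoopE; infer_instance

/-- An edge is a *simple loop* if exactly one vertex has multiplicity 2 and no vertex has
multiplicity greater than 2. -/
def isSimpleLoopE {n : ℕ} (e : Multiset (Fin n)) : Prop :=
  (Finset.univ.filter (fun v => e.count v = 2)).card = 1 ∧ ∀ v, e.count v ≤ 2

instance {n : ℕ} : DecidablePred (isSimpleLoopE (n := n)) := fun _ => by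
  unfold isSimpleLoopE; infer_instance

/-- The multigraph obtained from `G` by a forward switching: the loop `f` and proper edges
`e1, e2` are replaced by `e1' = e1 ∪ {v} - {y⋆}`, `e2' = e2 ∪ {v} - {z⋆}` and
`e3' = f ∪ {y⋆,z⋆} - {v,v}`. -/
def fwdResult {n : ℕ} (G : Multiset (Multiset (Fin n))) (f e1 e2 : Multiset (Fin n))
    (v ys zs : Fin n) : Multiset (Multiset (Fin n)) :=
  (v ::ₘ e1.erase ys) ::ₘ (v ::ₘ e2.erase zs) ::ₘ (ys ::ₘ zs ::ₘ (f.erase v).erase v) ::ₘ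
    (((G.erase f).erase e1).erase e2)

/-- A valid forward switching choice on `G` (which has `l` simple loops): `f` is a simple
loop with repeated vertex `v`; `e1 ≠ e2` are proper edges disjoint from `f` sharing at most
`k-2` vertices; `y⋆ ∈ e1 \ e2`, `z⋆ ∈ e2 \ e1`; and the resulting multigraph has no
multiple edges and exactly `l-1` loops, all of them simple. -/
def fwdOk (n k l : ℕ) (G : Multiset (Multiset (Fin n))) (f e1 e2 : Multiset (Fin n))
    (v ys zs : Fin n) : Prop :=
  isSimpleLoopE f ∧ f.count v = 2 ∧
  ¬ isLoopE e1 ∧ ¬ isLoopE e2 ∧ e1 ≠ e2 ∧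
  f ∩ e1 = 0 ∧ f ∩ e2 = 0 ∧
  Multiset.card (e1 ∩ e2) ≤ k - 2 ∧
  ys ∈ e1 ∧ ys ∉ e2 ∧ zs ∈ e2 ∧ zs ∉ e1 ∧
  (∀ e ∈ fwdResult G f e1 e2 v ys zs, (fwdResult G f e1 e2 v ys zs).count e = 1) ∧
  Multiset.card ((fwdResult G f e1 e2 v ys zs).filter isLoopE) = l - 1 ∧
  (∀ e ∈ fwdResult G f e1 e2 v ys zs, isLoopE e → isSimpleLoopE e)

instance (n k l : ℕ) (G : Multiset (Multiset (Fin n))) (f e1 e2 : Multiset (Fin n))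
    (v ys zs : Fin n) : Decidable (fwdOk n k l G f e1 e2 v ys zs) := by
  unfold fwdOk; infer_instance

/-- The set of all forward switching choices `(f, e1, e2, v, y⋆, z⋆)` applicable to `G`. -/
def fwdSwitchSet (n k l : ℕ) (G : Multiset (Multiset (Fin n))) :
    Finset ((Multiset (Fin n) × Multiset (Fin n) × Multiset (Fin n)) ×
      (Fin n × Fin n × Fin n)) :=
  ((G.toFinset ×ˢ G.toFinset ×ˢ G.toFinset) ×ˢ
      (Finset.univ : Finset (Fin n × Fin n × Fin n))).filter
    (fun t => fwdOk n k l G t.1.1 t.1.2.1 t.1.2.2 t.2.1 t.2.2.1 t.2.2.2)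

section helpers
variable {n : ℕ}

lemma count_le_one_of_not_loop {e : Multiset (Fin n)} (he : ¬ isLoopE e) (u : Fin n) :
    e.count u ≤ 1 := by
  by_contra h; exact he ⟨u, by omega⟩

lemma not_loop_of_count_le_one {e : Multiset (Fin n)} (h : ∀ u, e.count u ≤ 1) :
    ¬ isLoopE e := by
  rintro ⟨u, hu⟩; have := h u; omega

lemma simpleLoop_vertex_unique {f : Multiset (Fin n)} (hf : isSimpleLoopE f) {v w : Fin n}
    (hv : f.count v = 2) (hw : f.count w = 2) : v = w := by
  obtain ⟨a, ha⟩ := Finset.card_eq_one.mp hf.1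
  have h1 : v ∈ Finset.univ.filter (fun u => f.count u = 2) := by simp [hv]
  have h2 : w ∈ Finset.univ.filter (fun u => f.count u = 2) := by simp [hw]
  rw [ha, Finset.mem_singleton] at h1 h2
  rw [h1, h2]

lemma simpleLoop_count {f : Multiset (Fin n)} (hf : isSimpleLoopE f) {v u : Fin n}
    (hv : f.count v = 2) (hu : u ≠ v) : f.count u ≤ 1 := by
  by_contra h
  push_neg at h
  have h2 := hf.2 u
  have h3 : f.count u = 2 := by omega
  exact hu (simpleLoop_vertex_unique hf h3 hv)

lemma exists_doubled {f : Multiset (Fin n)} (hf : isSimpleLoopE f) : ∃ v, f.count v = 2 := by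
  obtain ⟨a, ha⟩ := Finset.card_eq_one.mp hf.1
  have : a ∈ Finset.univ.filter (fun u => f.count u = 2) := ha ▸ Finset.mem_singleton_self a
  exact ⟨a, by simpa using this⟩

lemma card_filter_mem_le (G : Multiset (Multiset (Fin n))) (u : Fin n) :
    Multiset.card (G.filter (fun e => u ∈ e)) ≤ (G.map (fun e => e.count u)).sum := by
  induction G using Multiset.induction_on with
  | empty => simp
  | cons a s ih =>
    by_cases h : u ∈ a
    · have h1 : 1 ≤ a.count u := Multiset.one_le_count_iff_mem.mpr h
      simp only [Multiset.filter_cons, Multiset.card_add, Multiset.map_cons,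
        Multiset.sum_cons, if_pos h, Multiset.card_singleton]
      omega
    · simp only [Multiset.filter_cons, Multiset.card_add, Multiset.map_cons,
        Multiset.sum_cons, if_neg h, Multiset.card_zero]
      omega

lemma mem_ne_of_inter_zero {a b : Multiset (Fin n)} (h : a ∩ b = 0) {u : Fin n}
    (hu : u ∈ a) : u ∉ b := fun hb =>
  (Multiset.eq_zero_iff_forall_notMem.mp h u) (Multiset.mem_inter.mpr ⟨hu, hb⟩)

lemma indexOf_inj' {α : Type*} [DecidableEq α] {l : List α} {a b : α} (ha : a ∈ l)
    (hb : b ∈ l) (h : List.idxOf a l = List.idxOf b l) : a = b := by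
  have h1 := List.idxOf_lt_length_iff.2 ha
  have h2 := List.idxOf_lt_length_iff.2 hb
  have e1 := List.idxOf_get h1
  have e2 := List.idxOf_get h2
  rw [← e1, ← e2]
  exact congrArg l.get (Fin.ext h)

end helpers

/-- Bounds on the number of forward switchings: if the `k`-multigraph `G` has `m = nd/k`
edges, maximum degree at most `d`, no multiple edges, and exactly `l ≥ 1` loops, all of
them simple, then the number of forward switchings applicable to `G` is at most
`l·k²·m² = n²d²·l` and at least `k²·l·(m - l - 2k²d²)²`. -/
theorem stmt11 (n d k m l : ℕ) (hk : 3 ≤ k) (hl : 1 ≤ l) (hm : n * d = k * m)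
    (G : Multiset (Multiset (Fin n)))
    (hGcard : Multiset.card G = m)
    (hedge : ∀ e ∈ G, Multiset.card e = k)
    (hdeg : ∀ v : Fin n, (G.map (fun e => e.count v)).sum ≤ d)
    (hnomult : ∀ e ∈ G, G.count e = 1)
    (hloops : Multiset.card (G.filter isLoopE) = l)
    (hsimple : ∀ e ∈ G, isLoopE e → isSimpleLoopE e) :
    (fwdSwitchSet n k l G).card ≤ l * k ^ 2 * m ^ 2 ∧
    l * k ^ 2 * m ^ 2 = n ^ 2 * d ^ 2 * l ∧
    k ^ 2 * l * (m - l - 2 * k ^ 2 * d ^ 2) ^ 2 ≤ (fwdSwitchSet n k l G).card := by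
  classical
  -- basic structural facts
  have hGnodup : G.Nodup := Multiset.nodup_iff_count_eq_one.mpr hnomult
  have hfiltercard : ∀ (p : Multiset (Fin n) → Prop) [DecidablePred p],
      (G.toFinset.filter p).card = Multiset.card (G.filter p) := by
    intro p _
    rw [← Multiset.toFinset_filter, Multiset.toFinset_card_of_nodup (hGnodup.filter p)]
  have htoFG : G.toFinset.card = m := by
    rw [Multiset.toFinset_card_of_nodup hGnodup, hGcard]
  -- a loop exists, so d ≥ 2 and n ≥ 1
  have hexloop : ∃ e, e ∈ G.filter isLoopE := by
    apply Multiset.exists_mem_of_ne_zero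
    intro h
    rw [h] at hloops
    simp at hloops
    omega
  obtain ⟨e0, he0⟩ := hexloop
  rw [Multiset.mem_filter] at he0
  obtain ⟨v0, hv0⟩ := he0.2
  have hd2 : 2 ≤ d := by
    refine le_trans hv0 (le_trans ?_ (hdeg v0))
    exact Multiset.single_le_sum (fun x _ => Nat.zero_le x) _
      (Multiset.mem_map_of_mem _ he0.1)
  have hn0 : 0 < n := v0.pos
  have hk0 : 0 < k := by omega
  -- degree-based neighbour counting
  have hmemle : ∀ u : Fin n, (G.toFinset.filter (fun e => u ∈ e)).card ≤ d := by
    intro u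
    rw [hfiltercard]
    exact le_trans (card_filter_mem_le G u) (hdeg u)
  have hnbr : ∀ h0 : Multiset (Fin n), Multiset.card h0 = k →
      (G.toFinset.filter (fun e => h0 ∩ e ≠ 0)).card ≤ k * d := by
    intro h0 hh0
    have hsub : G.toFinset.filter (fun e => h0 ∩ e ≠ 0) ⊆
        h0.toFinset.biUnion (fun u => G.toFinset.filter (fun e => u ∈ e)) := by
      intro e he
      rw [Finset.mem_filter] at he
      obtain ⟨u, hu⟩ := Multiset.exists_mem_of_ne_zero he.2
      rw [Multiset.mem_inter] at hu
      exact Finset.mem_biUnion.mpr ⟨u, Multiset.mem_toFinset.mpr hu.1,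
        Finset.mem_filter.mpr ⟨he.1, hu.2⟩⟩
    calc (G.toFinset.filter (fun e => h0 ∩ e ≠ 0)).card
        ≤ (h0.toFinset.biUnion (fun u => G.toFinset.filter (fun e => u ∈ e))).card :=
          Finset.card_le_card hsub
      _ ≤ ∑ u ∈ h0.toFinset, (G.toFinset.filter (fun e => u ∈ e)).card :=
          Finset.card_biUnion_le
      _ ≤ ∑ _u ∈ h0.toFinset, d := Finset.sum_le_sum (fun u _ => hmemle u)
      _ = h0.toFinset.card * d := by rw [Finset.sum_const, smul_eq_mul]
      _ ≤ k * d := Nat.mul_le_mul_right d (hh0 ▸ Multiset.toFinset_card_le h0)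
  -- loops finset
  set loopsF := G.toFinset.filter isLoopE with hloopsF
  have hloopsFcard : loopsF.card = l := by rw [hloopsF, hfiltercard, hloops]
  refine ⟨?_, ?_, ?_⟩
  ·
    -- upper bound via injection into (loopsF × G × G) × (range k × range k)
    set T := ((loopsF ×ˢ G.toFinset ×ˢ G.toFinset) ×ˢ
      ((Finset.range k) ×ˢ (Finset.range k))) with hT
    have hcardT : T.card = (l * (m * m)) * (k * k) := by
      rw [hT]
      simp [Finset.card_product, Finset.card_range, hloopsFcard, htoFG]
    set φ : (Multiset (Fin n) × Multiset (Fin n) × Multiset (Fin n)) ×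
        (Fin n × Fin n × Fin n) → (Multiset (Fin n) × Multiset (Fin n) × Multiset (Fin n)) ×
        (ℕ × ℕ) := fun t =>
      (t.1, (List.idxOf t.2.2.1 (t.1.2.1.toFinset.sort (· ≤ ·)),
             List.idxOf t.2.2.2 (t.1.2.2.toFinset.sort (· ≤ ·)))) with hφ
    have hmem : ∀ t ∈ fwdSwitchSet n k l G, φ t ∈ T := by
      rintro ⟨⟨f, e1, e2⟩, v, ys, zs⟩ ht
      rw [fwdSwitchSet, Finset.mem_filter] at ht
      obtain ⟨htP, hOk⟩ := ht
      rw [Finset.mem_product, Finset.mem_product, Finset.mem_product] at htP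
      obtain ⟨⟨hfG, he1G, he2G⟩, -⟩ := htP
      have hOk' : fwdOk n k l G f e1 e2 v ys zs := hOk
      obtain ⟨h1, h2, h3, h4, h5, h6, h7, h8, h9, h10, h11, h12, h13, h14, h15⟩ := hOk'
      have hfe : isLoopE f := ⟨v, by omega⟩
      have hidx : ∀ (e : Multiset (Fin n)) (u : Fin n), e ∈ G → u ∈ e →
          List.idxOf u (e.toFinset.sort (· ≤ ·)) ∈ Finset.range k := by
        intro e u heG hue
        rw [Finset.mem_range]
        have hlt : List.idxOf u (e.toFinset.sort (· ≤ ·)) <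
            (e.toFinset.sort (· ≤ ·)).length :=
          List.idxOf_lt_length_iff.mpr ((Finset.mem_sort _).mpr (Multiset.mem_toFinset.mpr hue))
        have hlen : (e.toFinset.sort (· ≤ ·)).length ≤ k := by
          rw [Finset.length_sort]
          exact le_trans (Multiset.toFinset_card_le e) (le_of_eq (hedge e heG))
        omega
      simp only [hT, hφ, Finset.mem_product]
      refine ⟨⟨Finset.mem_filter.mpr ⟨hfG, hfe⟩, he1G, he2G⟩, ?_, ?_⟩
      · exact hidx e1 ys (Multiset.mem_toFinset.mp he1G) h9
      · exact hidx e2 zs (Multiset.mem_toFinset.mp he2G) h11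
    have hinj : Set.InjOn φ ↑(fwdSwitchSet n k l G) := by
      rintro ⟨⟨f, e1, e2⟩, v, ys, zs⟩ ha ⟨⟨f', e1', e2'⟩, v', ys', zs'⟩ hb heq
      rw [Finset.mem_coe, fwdSwitchSet, Finset.mem_filter] at ha hb
      obtain ⟨-, hOa⟩ := ha
      obtain ⟨-, hOb⟩ := hb
      have hOa' : fwdOk n k l G f e1 e2 v ys zs := hOa
      have hOb' : fwdOk n k l G f' e1' e2' v' ys' zs' := hOb
      simp only [hφ, Prod.mk.injEq] at heq
      obtain ⟨⟨rfl, rfl, rfl⟩, hy, hz⟩ := heq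
      obtain ⟨ha1, ha2, ha3, ha4, ha5, ha6, ha7, ha8, ha9, ha10, ha11, ha12, -⟩ := hOa'
      obtain ⟨hb1, hb2, hb3, hb4, hb5, hb6, hb7, hb8, hb9, hb10, hb11, hb12, -⟩ := hOb'
      have hv : v = v' := simpleLoop_vertex_unique ha1 ha2 hb2
      have hys : ys = ys' := by
        refine indexOf_inj' ?_ ?_ hy
        · exact (Finset.mem_sort _).mpr (Multiset.mem_toFinset.mpr ha9)
        · exact (Finset.mem_sort _).mpr (Multiset.mem_toFinset.mpr hb9)
      have hzs : zs = zs' := by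
        refine indexOf_inj' ?_ ?_ hz
        · exact (Finset.mem_sort _).mpr (Multiset.mem_toFinset.mpr ha11)
        · exact (Finset.mem_sort _).mpr (Multiset.mem_toFinset.mpr hb11)
      rw [hv, hys, hzs]
    calc (fwdSwitchSet n k l G).card ≤ T.card := Finset.card_le_card_of_injOn φ hmem hinj
      _ = l * k ^ 2 * m ^ 2 := by rw [hcardT]; ring

  · -- middle equality
    calc l * k ^ 2 * m ^ 2 = (k * m) ^ 2 * l := by ring
      _ = (n * d) ^ 2 * l := by rw [hm]
      _ = n ^ 2 * d ^ 2 * l := by ring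
  ·
    -- lower bound
    haveI : Inhabited (Fin n) := ⟨⟨0, hn0⟩⟩
    set vOf : Multiset (Fin n) → Fin n :=
      fun f => if h : ∃ v, f.count v = 2 then h.choose else default with hvOf
    have hvOfspec : ∀ f : Multiset (Fin n), isSimpleLoopE f → f.count (vOf f) = 2 := by
      intro f hf
      obtain ⟨v, hv⟩ := exists_doubled hf
      rw [hvOf]
      dsimp only
      rw [dif_pos ⟨v, hv⟩]
      exact Exists.choose_spec (⟨v, hv⟩ : ∃ u, Multiset.count u f = 2)
    set good1 : Multiset (Fin n) → Finset (Multiset (Fin n)) :=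
      fun f => G.toFinset.filter
        (fun e => ¬ isLoopE e ∧ ∀ g ∈ G, g ∩ f ≠ 0 → g ∩ e = 0) with hgood1
    set good2 : Multiset (Fin n) → Multiset (Fin n) → Finset (Multiset (Fin n)) :=
      fun f e1 => (good1 f).filter (fun e => e1 ∩ e = 0) with hgood2
    set t := m - l - 2 * k ^ 2 * d ^ 2 with htdef
    have hg1 : ∀ f : Multiset (Fin n), ∀ e ∈ good1 f,
        e ∈ G ∧ ¬ isLoopE e ∧ ∀ g ∈ G, g ∩ f ≠ 0 → g ∩ e = 0 := by
      intro f e he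
      rw [hgood1] at he
      simp only [Finset.mem_filter, Multiset.mem_toFinset] at he
      exact ⟨he.1, he.2.1, he.2.2⟩
    have hg2 : ∀ f e1 : Multiset (Fin n), ∀ e ∈ good2 f e1,
        e ∈ good1 f ∧ e1 ∩ e = 0 := by
      intro f e1 e he
      rw [hgood2] at he
      simp only [Finset.mem_filter] at he
      exact he
    -- size of good1
    have hgood1m : ∀ f ∈ loopsF, m ≤ (good1 f).card + (l + (k * d) * (k * d)) := by
      intro f hf
      rw [Finset.mem_filter] at hf
      have hfk : Multiset.card f = k := hedge f (Multiset.mem_toFinset.mp hf.1)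
      have hsplit := Finset.card_filter_add_card_filter_not
        (s := G.toFinset)
        (p := fun e => ¬ isLoopE e ∧ ∀ g ∈ G, g ∩ f ≠ 0 → g ∩ e = 0)
      have hcompsub : G.toFinset.filter
            (fun e => ¬(¬ isLoopE e ∧ ∀ g ∈ G, g ∩ f ≠ 0 → g ∩ e = 0))
          ⊆ (G.toFinset.filter isLoopE) ∪
            ((G.toFinset.filter (fun g => f ∩ g ≠ 0)).biUnion
              (fun g => G.toFinset.filter (fun e => g ∩ e ≠ 0))) := by
        intro e he
        rw [Finset.mem_filter] at he
        obtain ⟨heG, hbad⟩ := he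
        rw [Finset.mem_union]
        by_cases hL : isLoopE e
        · exact Or.inl (Finset.mem_filter.mpr ⟨heG, hL⟩)
        · push_neg at hbad
          obtain ⟨g, hgG, hgf, hge⟩ := hbad hL
          refine Or.inr (Finset.mem_biUnion.mpr ⟨g, Finset.mem_filter.mpr
            ⟨Multiset.mem_toFinset.mpr hgG, ?_⟩, Finset.mem_filter.mpr ⟨heG, hge⟩⟩)
          rwa [Multiset.inter_comm] at hgf
      have hcompcard : (G.toFinset.filter
          (fun e => ¬(¬ isLoopE e ∧ ∀ g ∈ G, g ∩ f ≠ 0 → g ∩ e = 0))).card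
          ≤ l + (k * d) * (k * d) := by
        refine le_trans (Finset.card_le_card hcompsub) ?_
        refine le_trans (Finset.card_union_le _ _) ?_
        have h2 : ((G.toFinset.filter (fun g => f ∩ g ≠ 0)).biUnion
            (fun g => G.toFinset.filter (fun e => g ∩ e ≠ 0))).card ≤ (k * d) * (k * d) := by
          refine le_trans Finset.card_biUnion_le ?_
          calc ∑ g ∈ G.toFinset.filter (fun g => f ∩ g ≠ 0),
                (G.toFinset.filter (fun e => g ∩ e ≠ 0)).card
              ≤ ∑ g ∈ G.toFinset.filter (fun g => f ∩ g ≠ 0), k * d := by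
                refine Finset.sum_le_sum (fun g hg => ?_)
                rw [Finset.mem_filter] at hg
                exact hnbr g (hedge g (Multiset.mem_toFinset.mp hg.1))
            _ = (G.toFinset.filter (fun g => f ∩ g ≠ 0)).card * (k * d) := by
                rw [Finset.sum_const, smul_eq_mul]
            _ ≤ (k * d) * (k * d) := Nat.mul_le_mul_right _ (hnbr f hfk)
        have h1 : (G.toFinset.filter isLoopE).card = l := hloopsFcard
        omega
      simp only [hgood1]
      omega
    -- size of good2
    have hgood2m : ∀ (f : Multiset (Fin n)), ∀ e1 ∈ good1 f,
        (good1 f).card ≤ (good2 f e1).card + k * d := by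
      intro f e1 he1
      have he1G : e1 ∈ G := (hg1 f e1 he1).1
      have hsplit := Finset.card_filter_add_card_filter_not
        (s := good1 f) (p := fun e => e1 ∩ e = 0)
      have hcompsub : (good1 f).filter (fun e => ¬ e1 ∩ e = 0)
          ⊆ G.toFinset.filter (fun e => e1 ∩ e ≠ 0) := by
        intro e he
        rw [Finset.mem_filter] at he
        exact Finset.mem_filter.mpr ⟨Multiset.mem_toFinset.mpr (hg1 f e he.1).1, he.2⟩
      have hcomp : ((good1 f).filter (fun e => ¬ e1 ∩ e = 0)).card ≤ k * d :=
        le_trans (Finset.card_le_card hcompsub) (hnbr e1 (hedge e1 he1G))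
      simp only [hgood2]
      omega
    have hkd : k * d ≤ (k * d) * (k * d) :=
      Nat.le_mul_of_pos_left _ (by positivity)
    have hbridge : 2 * k ^ 2 * d ^ 2 = (k * d) * (k * d) + (k * d) * (k * d) := by ring
    have hgood1t : ∀ f ∈ loopsF, t ≤ (good1 f).card := by
      intro f hf
      have := hgood1m f hf
      omega
    have hgood2t : ∀ f ∈ loopsF, ∀ e1 ∈ good1 f, t ≤ (good2 f e1).card := by
      intro f hf e1 he1
      have h1 := hgood1m f hf
      have h2 := hgood2m f e1 he1
      omega
    -- vertex-set sizes
    have hprodcard : ∀ e ∈ G, ¬ isLoopE e → e.toFinset.card = k := by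
      intro e he hne
      rw [Multiset.toFinset_card_of_nodup
        (Multiset.nodup_iff_count_le_one.mpr (count_le_one_of_not_loop hne))]
      exact hedge e he
    -- the sigma set
    set D := loopsF.sigma (fun f => (good1 f).sigma (fun e1 => (good2 f e1).sigma
      (fun e2 => e1.toFinset ×ˢ e2.toFinset))) with hD
    have hin2 : ∀ f ∈ loopsF, ∀ e1 ∈ good1 f, t * (k * k) ≤
        ((good2 f e1).sigma (fun e2 => e1.toFinset ×ˢ e2.toFinset)).card := by
      intro f hf e1 he1
      rw [Finset.card_sigma]
      have he1k : e1.toFinset.card = k :=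
        hprodcard e1 (hg1 f e1 he1).1 (hg1 f e1 he1).2.1
      have hconst : ∀ e2 ∈ good2 f e1, (e1.toFinset ×ˢ e2.toFinset).card = k * k := by
        intro e2 he2
        have h2 := hg1 f e2 (hg2 f e1 e2 he2).1
        rw [Finset.card_product, he1k, hprodcard e2 h2.1 h2.2.1]
      calc t * (k * k) ≤ (good2 f e1).card * (k * k) :=
            Nat.mul_le_mul_right _ (hgood2t f hf e1 he1)
        _ = ∑ _e2 ∈ good2 f e1, k * k := by rw [Finset.sum_const, smul_eq_mul]
        _ ≤ ∑ e2 ∈ good2 f e1, (e1.toFinset ×ˢ e2.toFinset).card :=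
            Finset.sum_le_sum (fun e2 he2 => le_of_eq (hconst e2 he2).symm)
    have hin1 : ∀ f ∈ loopsF, t * (t * (k * k)) ≤
        ((good1 f).sigma (fun e1 => (good2 f e1).sigma
          (fun e2 => e1.toFinset ×ˢ e2.toFinset))).card := by
      intro f hf
      rw [Finset.card_sigma]
      have h1 := Finset.card_nsmul_le_sum (good1 f) _ (t * (k * k))
        (fun e1 he1 => hin2 f hf e1 he1)
      rw [smul_eq_mul] at h1
      exact le_trans (Nat.mul_le_mul_right _ (hgood1t f hf)) h1
    have hDcard : l * (t * (t * (k * k))) ≤ D.card := by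
      rw [hD, Finset.card_sigma]
      have h1 := Finset.card_nsmul_le_sum loopsF _ (t * (t * (k * k))) hin1
      rw [hloopsFcard, smul_eq_mul] at h1
      exact h1
    -- the injection into fwdSwitchSet
    set ι : ((_ : Multiset (Fin n)) × (_ : Multiset (Fin n)) × (_ : Multiset (Fin n)) ×
        (Fin n × Fin n)) → ((Multiset (Fin n) × Multiset (Fin n) × Multiset (Fin n)) ×
        (Fin n × Fin n × Fin n)) :=
      fun x => ((x.1, x.2.1, x.2.2.1), (vOf x.1, x.2.2.2.1, x.2.2.2.2)) with hι
    have hmemD : ∀ x ∈ D, ι x ∈ fwdSwitchSet n k l G := by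
      rintro ⟨f, e1, e2, ys, zs⟩ hx
      simp only [hD, Finset.mem_sigma, Finset.mem_product] at hx
      obtain ⟨hfL, he1g, he2g, hysF, hzsF⟩ := hx
      obtain ⟨hfG', hfLoop⟩ := Finset.mem_filter.mp hfL
      have hfG : f ∈ G := Multiset.mem_toFinset.mp hfG'
      have hfS : isSimpleLoopE f := hsimple f hfG hfLoop
      set v := vOf f with hvdef
      have hv2 : f.count v = 2 := hvOfspec f hfS
      have hvf : v ∈ f := Multiset.count_pos.mp (by omega)
      obtain ⟨he1G, he1NL, he1far⟩ := hg1 f e1 he1g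
      have h12 : e1 ∩ e2 = 0 := (hg2 f e1 e2 he2g).2
      obtain ⟨he2G, he2NL, he2far⟩ := hg1 f e2 (hg2 f e1 e2 he2g).1
      have hfk : Multiset.card f = k := hedge f hfG
      have he1k : Multiset.card e1 = k := hedge e1 he1G
      have he2k : Multiset.card e2 = k := hedge e2 he2G
      have hff : f ∩ f ≠ 0 := fun hz =>
        (Multiset.eq_zero_iff_forall_notMem.mp hz v)
          (Multiset.mem_inter.mpr ⟨hvf, hvf⟩)
      have hf1 : f ∩ e1 = 0 := he1far f hfG hff
      have hf2 : f ∩ e2 = 0 := he2far f hfG hff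
      have hys1 : ys ∈ e1 := Multiset.mem_toFinset.mp hysF
      have hzs2 : zs ∈ e2 := Multiset.mem_toFinset.mp hzsF
      have hyse2 : ys ∉ e2 := mem_ne_of_inter_zero h12 hys1
      have hzse1 : zs ∉ e1 := fun h => mem_ne_of_inter_zero h12 h hzs2
      have hv1 : v ∉ e1 := mem_ne_of_inter_zero hf1 hvf
      have hv2' : v ∉ e2 := mem_ne_of_inter_zero hf2 hvf
      have hysf : ys ∉ f := fun h => mem_ne_of_inter_zero hf1 h hys1
      have hzsf : zs ∉ f := fun h => mem_ne_of_inter_zero hf2 h hzs2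
      have hyv : ys ≠ v := fun h => hysf (h ▸ hvf)
      have hzv : zs ≠ v := fun h => hzsf (h ▸ hvf)
      have hyz : ys ≠ zs := fun h => hyse2 (h ▸ hzs2)
      have he1c := count_le_one_of_not_loop he1NL
      have he2c := count_le_one_of_not_loop he2NL
      have he12 : e1 ≠ e2 := fun h => hyse2 (h ▸ hys1)
      have hfe1 : f ≠ e1 := by
        intro h
        subst h
        exact (Multiset.eq_zero_iff_forall_notMem.mp hf1 ys)
          (Multiset.mem_inter.mpr ⟨hys1, hys1⟩)
      have hfe2 : f ≠ e2 := by
        intro h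
        subst h
        exact (Multiset.eq_zero_iff_forall_notMem.mp hf2 zs)
          (Multiset.mem_inter.mpr ⟨hzs2, hzs2⟩)
      -- the four pieces of the switched multigraph
      set A := v ::ₘ e1.erase ys with hA
      set B := v ::ₘ e2.erase zs with hB
      set C := ys ::ₘ zs ::ₘ (f.erase v).erase v with hC
      set G3 := ((G.erase f).erase e1).erase e2 with hG3
      have hRes : fwdResult G f e1 e2 v ys zs = A ::ₘ B ::ₘ C ::ₘ G3 := rfl
      -- nodup / not-loop of the new edges
      have he1nodup : e1.Nodup := Multiset.nodup_iff_count_le_one.mpr he1c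
      have he2nodup : e2.Nodup := Multiset.nodup_iff_count_le_one.mpr he2c
      have hAnodup : A.Nodup := by
        rw [hA, Multiset.nodup_cons]
        exact ⟨fun h => hv1 (Multiset.mem_of_mem_erase h),
          Multiset.nodup_of_le (Multiset.erase_le _ _) he1nodup⟩
      have hBnodup : B.Nodup := by
        rw [hB, Multiset.nodup_cons]
        exact ⟨fun h => hv2' (Multiset.mem_of_mem_erase h),
          Multiset.nodup_of_le (Multiset.erase_le _ _) he2nodup⟩
      have hrest_nodup : ((f.erase v).erase v).Nodup := by
        rw [Multiset.nodup_iff_count_le_one]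
        intro u
        rcases eq_or_ne u v with rfl | h
        · rw [Multiset.count_erase_self, Multiset.count_erase_self]
          omega
        · refine le_trans (le_trans (Multiset.count_le_of_le u (Multiset.erase_le _ _))
            (Multiset.count_le_of_le u (Multiset.erase_le _ _))) ?_
          exact simpleLoop_count hfS hv2 h
      have hysrest : ys ∉ (f.erase v).erase v :=
        fun h => hysf (Multiset.mem_of_mem_erase (Multiset.mem_of_mem_erase h))
      have hzsrest : zs ∉ (f.erase v).erase v :=
        fun h => hzsf (Multiset.mem_of_mem_erase (Multiset.mem_of_mem_erase h))
      have hCnodup : C.Nodup := by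
        rw [hC, Multiset.nodup_cons, Multiset.nodup_cons]
        refine ⟨?_, hzsrest, hrest_nodup⟩
        rw [Multiset.mem_cons]
        push_neg
        exact ⟨hyz, hysrest⟩
      have hAnl : ¬ isLoopE A :=
        not_loop_of_count_le_one (fun u => Multiset.nodup_iff_count_le_one.mp hAnodup u)
      have hBnl : ¬ isLoopE B :=
        not_loop_of_count_le_one (fun u => Multiset.nodup_iff_count_le_one.mp hBnodup u)
      have hCnl : ¬ isLoopE C :=
        not_loop_of_count_le_one (fun u => Multiset.nodup_iff_count_le_one.mp hCnodup u)
      -- distinctness of the new edges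
      have hvA : v ∈ A := Multiset.mem_cons_self _ _
      have hvB : v ∈ B := Multiset.mem_cons_self _ _
      have hvC : v ∉ C := by
        rw [hC, Multiset.mem_cons, Multiset.mem_cons]
        push_neg
        refine ⟨Ne.symm hyv, Ne.symm hzv, ?_⟩
        intro h
        have := Multiset.count_pos.mpr h
        rw [Multiset.count_erase_self, Multiset.count_erase_self] at this
        omega
      obtain ⟨u2, hu2⟩ : ∃ u, u ∈ e2.erase zs := by
        apply Multiset.exists_mem_of_ne_zero
        intro h
        have hc := congrArg Multiset.card h
        rw [Multiset.card_erase_of_mem hzs2, he2k] at hc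
        simp at hc
        omega
      have hu2e2 : u2 ∈ e2 := Multiset.mem_of_mem_erase hu2
      obtain ⟨u1, hu1⟩ : ∃ u, u ∈ e1.erase ys := by
        apply Multiset.exists_mem_of_ne_zero
        intro h
        have hc := congrArg Multiset.card h
        rw [Multiset.card_erase_of_mem hys1, he1k] at hc
        simp at hc
        omega
      have hu1e1 : u1 ∈ e1 := Multiset.mem_of_mem_erase hu1
      have hAB : A ≠ B := by
        intro h
        have h1 : u2 ∈ B := by rw [hB]; exact Multiset.mem_cons_of_mem hu2
        rw [← h, hA, Multiset.mem_cons] at h1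
        rcases h1 with h1 | h1
        · exact hv2' (h1 ▸ hu2e2)
        · exact mem_ne_of_inter_zero h12 (Multiset.mem_of_mem_erase h1) hu2e2
      have hAC : A ≠ C := fun h => hvC (h ▸ hvA)
      have hBC : B ≠ C := fun h => hvC (h ▸ hvB)
      -- the old edges
      have hG3le : G3 ≤ G := le_trans (Multiset.erase_le _ _)
        (le_trans (Multiset.erase_le _ _) (Multiset.erase_le _ _))
      have hG3nodup : G3.Nodup := Multiset.nodup_of_le hG3le hGnodup
      have hAG3 : A ∉ G3 := by
        intro h
        have hAG : A ∈ G := Multiset.mem_of_le hG3le h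
        have hAf : A ∩ f ≠ 0 := fun hz =>
          (Multiset.eq_zero_iff_forall_notMem.mp hz v)
            (Multiset.mem_inter.mpr ⟨hvA, hvf⟩)
        have hz := he1far A hAG hAf
        exact mem_ne_of_inter_zero hz (Multiset.mem_cons_of_mem hu1) hu1e1
      have hBG3 : B ∉ G3 := by
        intro h
        have hBG : B ∈ G := Multiset.mem_of_le hG3le h
        have hBf : B ∩ f ≠ 0 := fun hz =>
          (Multiset.eq_zero_iff_forall_notMem.mp hz v)
            (Multiset.mem_inter.mpr ⟨hvB, hvf⟩)
        have hz := he2far B hBG hBf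
        exact mem_ne_of_inter_zero hz (Multiset.mem_cons_of_mem hu2) hu2e2
      obtain ⟨w, hw⟩ : ∃ w, w ∈ (f.erase v).erase v := by
        apply Multiset.exists_mem_of_ne_zero
        intro h
        have hvf2 : v ∈ f.erase v := by
          rw [← Multiset.count_pos, Multiset.count_erase_self]
          omega
        have hc := congrArg Multiset.card h
        rw [Multiset.card_erase_of_mem hvf2, Multiset.card_erase_of_mem hvf, hfk] at hc
        simp at hc
        omega
      have hwf : w ∈ f := Multiset.mem_of_mem_erase (Multiset.mem_of_mem_erase hw)
      have hCG3 : C ∉ G3 := by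
        intro h
        have hCG : C ∈ G := Multiset.mem_of_le hG3le h
        have hwC : w ∈ C := by
          rw [hC]
          exact Multiset.mem_cons_of_mem (Multiset.mem_cons_of_mem hw)
        have hCf : C ∩ f ≠ 0 := fun hz =>
          (Multiset.eq_zero_iff_forall_notMem.mp hz w)
            (Multiset.mem_inter.mpr ⟨hwC, hwf⟩)
        have hz := he1far C hCG hCf
        exact mem_ne_of_inter_zero hz (by rw [hC]; exact Multiset.mem_cons_self _ _) hys1
      have hRnodup : (A ::ₘ B ::ₘ C ::ₘ G3).Nodup := by
        rw [Multiset.nodup_cons, Multiset.nodup_cons, Multiset.nodup_cons]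
        refine ⟨?_, ⟨?_, hCG3, hG3nodup⟩⟩
        · rw [Multiset.mem_cons, Multiset.mem_cons]
          push_neg
          exact ⟨hAB, hAC, hAG3⟩
        · rw [Multiset.mem_cons]
          push_neg
          exact ⟨hBC, hBG3⟩
      -- loop counting
      have he1ef : e1 ∈ G.erase f :=
        (Multiset.mem_erase_of_ne (Ne.symm hfe1)).mpr he1G
      have he2ef : e2 ∈ (G.erase f).erase e1 :=
        (Multiset.mem_erase_of_ne (Ne.symm he12)).mpr
          ((Multiset.mem_erase_of_ne (Ne.symm hfe2)).mpr he2G)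
      have hcount1 : Multiset.card ((G.erase f).filter isLoopE) = l - 1 := by
        have h2 : Multiset.filter isLoopE G = f ::ₘ (G.erase f).filter isLoopE := by
          conv_lhs => rw [← Multiset.cons_erase hfG]
          rw [Multiset.filter_cons_of_pos _ hfLoop]
        have h3 := hloops
        rw [h2, Multiset.card_cons] at h3
        omega
      have hfilter3 : Multiset.card (G3.filter isLoopE) = l - 1 := by
        have h1 : (G.erase f).filter isLoopE = ((G.erase f).erase e1).filter isLoopE := by
          conv_lhs => rw [← Multiset.cons_erase he1ef]
          rw [Multiset.filter_cons_of_neg _ he1NL]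
        have h2 : ((G.erase f).erase e1).filter isLoopE = G3.filter isLoopE := by
          conv_lhs => rw [← Multiset.cons_erase he2ef]
          rw [hG3, Multiset.filter_cons_of_neg _ he2NL]
        rw [← h2, ← h1]
        exact hcount1
      -- assemble
      rw [fwdSwitchSet, Finset.mem_filter]
      constructor
      · simp only [Finset.mem_product, Finset.mem_univ, and_true]
        exact ⟨hfG', Multiset.mem_toFinset.mpr he1G, Multiset.mem_toFinset.mpr he2G⟩
      · show fwdOk n k l G f e1 e2 v ys zs
        refine ⟨hfS, hv2, he1NL, he2NL, he12, hf1, hf2, ?_, hys1, hyse2, hzs2, hzse1,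
          ?_, ?_, ?_⟩
        · rw [h12]
          simp
        · intro e he
          rw [hRes] at he ⊢
          exact Multiset.nodup_iff_count_eq_one.mp hRnodup e he
        · rw [hRes, Multiset.filter_cons_of_neg _ hAnl, Multiset.filter_cons_of_neg _ hBnl,
            Multiset.filter_cons_of_neg _ hCnl]
          exact hfilter3
        · intro e he hloop
          rw [hRes, Multiset.mem_cons, Multiset.mem_cons, Multiset.mem_cons] at he
          rcases he with rfl | rfl | rfl | he
          · exact absurd hloop hAnl
          · exact absurd hloop hBnl
          · exact absurd hloop hCnl
          · exact hsimple e (Multiset.mem_of_le hG3le he) hloop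
    have hinjD : Set.InjOn ι ↑D := by
      rintro ⟨f, e1, e2, ys, zs⟩ - ⟨f', e1', e2', ys', zs'⟩ - heq
      simp only [hι, Prod.mk.injEq] at heq
      obtain ⟨⟨rfl, rfl, rfl⟩, -, rfl, rfl⟩ := heq
      rfl
    calc k ^ 2 * l * t ^ 2 = l * (t * (t * (k * k))) := by ring
      _ ≤ D.card := hDcard
      _ ≤ (fwdSwitchSet n k l G).card := Finset.card_le_card_of_injOn ι hmemD hinjD
end
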